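/- arXiv:2105.12490 — 7 statements merged into one kernel-verified Lean document; each statement's English description precedes it below -/
import Mathlib

section
/- Let n be an even positive integer and k a positive integer with 1 ≤ k < n/2 such that (2k+1) divides n. Then the equitable total chromatic number of the power of cycle C_n^k equals its total chromatic number, and both equal 2k + 1. -/
open SimpleGraph

/-- A total coloring of `G` with `t` colors: a vertex coloring `cv` and an edge coloring `ce`
such that adjacent vertices get distinct colors, distinct edges sharing an endpoint get
distinct colors, and every edge gets a color distinct from those of its endpoints. -/
def IsTotalColoring {V : Type*} (G : SimpleGraph V) {t : ℕ}
    (cv : V → Fin t) (ce : Sym2 V → Fin t) : Prop :=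
  (∀ u v : V, G.Adj u v → cv u ≠ cv v) ∧
  (∀ e₁ ∈ G.edgeSet, ∀ e₂ ∈ G.edgeSet, e₁ ≠ e₂ → (∃ u : V, u ∈ e₁ ∧ u ∈ e₂) →
    ce e₁ ≠ ce e₂) ∧
  (∀ e ∈ G.edgeSet, ∀ u : V, u ∈ e → ce e ≠ cv u)

/-- The total chromatic number of `G`. -/
noncomputable def totalChromaticNumber {V : Type*} (G : SimpleGraph V) : ℕ :=
  sInf {t : ℕ | ∃ cv : V → Fin t, ∃ ce : Sym2 V → Fin t, IsTotalColoring G cv ce}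

/-- The size of the color class of color `c`: vertices plus edges colored `c`. -/
noncomputable def totalClassSize {V : Type*} (G : SimpleGraph V) {t : ℕ}
    (cv : V → Fin t) (ce : Sym2 V → Fin t) (c : Fin t) : ℕ :=
  {v : V | cv v = c}.ncard + {e : Sym2 V | e ∈ G.edgeSet ∧ ce e = c}.ncard

/-- An equitable total coloring: a total coloring whose color class sizes pairwise differ
by at most one. -/
def IsEquitableTotalColoring {V : Type*} (G : SimpleGraph V) {t : ℕ}
    (cv : V → Fin t) (ce : Sym2 V → Fin t) : Prop :=
  IsTotalColoring G cv ce ∧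
  ∀ c c' : Fin t, totalClassSize G cv ce c ≤ totalClassSize G cv ce c' + 1

/-- The equitable total chromatic number of `G`. -/
noncomputable def equitableTotalChromaticNumber {V : Type*} (G : SimpleGraph V) : ℕ :=
  sInf {t : ℕ | ∃ cv : V → Fin t, ∃ ce : Sym2 V → Fin t, IsEquitableTotalColoring G cv ce}

/-- The color sum at a vertex `u`: the color of `u` plus the colors of all edges incident
with `u`, where color `c : Fin t` represents the integer color `c + 1 ∈ {1, …, t}`. -/
noncomputable def nsdSum {V : Type*} (G : SimpleGraph V) {t : ℕ}
    (cv : V → Fin t) (ce : Sym2 V → Fin t) (u : V) : ℕ :=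
  ((cv u : ℕ) + 1) + ∑ᶠ e ∈ G.incidenceSet u, ((ce e : ℕ) + 1)

/-- A neighborhood sum distinguishing total coloring: a total coloring such that adjacent
vertices have distinct color sums. -/
def IsNSDTotalColoring {V : Type*} (G : SimpleGraph V) {t : ℕ}
    (cv : V → Fin t) (ce : Sym2 V → Fin t) : Prop :=
  IsTotalColoring G cv ce ∧
  ∀ u v : V, G.Adj u v → nsdSum G cv ce u ≠ nsdSum G cv ce v

/-- The neighborhood sum distinguishing total chromatic number of `G`. -/
noncomputable def nsdTotalChromaticNumber {V : Type*} (G : SimpleGraph V) : ℕ :=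
  sInf {t : ℕ | ∃ cv : V → Fin t, ∃ ce : Sym2 V → Fin t, IsNSDTotalColoring G cv ce}

/-- The power of cycle `C_n^k`: vertices `ZMod n`, with `x ~ y` iff `x - y ≡ ±j (mod n)`
for some `1 ≤ j ≤ k`. -/
def powerOfCycle (n k : ℕ) : SimpleGraph (ZMod n) :=
  SimpleGraph.fromRel (fun x y => ∃ j : ℕ, 1 ≤ j ∧ j ≤ k ∧ x - y = (j : ZMod n))

/-- The circulant graph `Cay(ZMod n, S)`: `x ~ y` iff `x - y ∈ S` (symmetrized). -/
def cayley (n : ℕ) (S : Finset (ZMod n)) : SimpleGraph (ZMod n) :=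
  SimpleGraph.fromRel (fun x y => x - y ∈ S)

instance cayley.instDecidableRelAdj (n : ℕ) (S : Finset (ZMod n)) :
    DecidableRel (cayley n S).Adj :=
  fun x y => inferInstanceAs (Decidable (x ≠ y ∧ (x - y ∈ S ∨ y - x ∈ S)))

namespace PCAux

variable {n k : ℕ}

theorem adj_iff (x y : ZMod n) :
    (powerOfCycle n k).Adj x y ↔ x ≠ y ∧ ∃ j : ℕ, 1 ≤ j ∧ j ≤ k ∧
      (x - y = (j : ZMod n) ∨ y - x = (j : ZMod n)) := by
  simp only [powerOfCycle, fromRel_adj]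
  constructor
  · rintro ⟨hne, ⟨j,h1,h2,h3⟩|⟨j,h1,h2,h3⟩⟩
    · exact ⟨hne, j, h1, h2, Or.inl h3⟩
    · exact ⟨hne, j, h1, h2, Or.inr h3⟩
  · rintro ⟨hne, j, h1, h2, h3|h3⟩
    · exact ⟨hne, Or.inl ⟨j, h1, h2, h3⟩⟩
    · exact ⟨hne, Or.inr ⟨j, h1, h2, h3⟩⟩

/-- adjacency gives an integer difference -/
theorem adj_int {x y : ZMod n} (h : (powerOfCycle n k).Adj x y) :
    ∃ a : ℤ, a ≠ 0 ∧ a.natAbs ≤ k ∧ y - x = (a : ZMod n) := by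
  rw [adj_iff] at h
  obtain ⟨-, j, hj1, hjk, hcase | hcase⟩ := h
  · exact ⟨-(j:ℤ), by omega, by simp; omega, by push_cast; rw [← hcase]; ring⟩
  · exact ⟨(j:ℤ), by omega, by simp; omega, by push_cast; rw [← hcase]⟩

theorem int_ne_zero (hk : 1 ≤ k) {a : ℤ} (ha : a ≠ 0) (hbd : a.natAbs ≤ 2*k) :
    (a : ZMod (2*k+1)) ≠ 0 := by
  intro h
  rw [ZMod.intCast_zmod_eq_zero_iff_dvd] at h
  have h2 : (2*k+1 : ℕ) ∣ a.natAbs := by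
    have h3 := Int.natAbs_dvd_natAbs.mpr h
    rwa [Int.natAbs_natCast] at h3
  have := Nat.le_of_dvd (by omega : 0 < a.natAbs) h2
  omega

variable (hdvd : (2*k+1) ∣ n)

instance : NeZero (2*k+1) := ⟨Nat.succ_ne_zero _⟩

noncomputable def φ (hdvd : (2*k+1) ∣ n) : ZMod n →+* ZMod (2*k+1) :=
  ZMod.castHom hdvd _

noncomputable def i2 (k : ℕ) : ZMod (2*k+1) := (2 : ZMod (2*k+1))⁻¹

theorem two_i2 : (2 : ZMod (2*k+1)) * i2 k = 1 := by
  refine ZMod.mul_inv_of_unit _ ?_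
  have h2 : ((2:ℕ) : ZMod (2*k+1)) = (2 : ZMod (2*k+1)) := by norm_cast
  rw [← h2, ZMod.isUnit_iff_coprime, Nat.coprime_two_left]
  exact ⟨k, rfl⟩

/-- ZMod-valued vertex coloring -/
noncomputable def cvZ (hdvd : (2*k+1) ∣ n) (x : ZMod n) : ZMod (2*k+1) := φ hdvd x

/-- ZMod-valued edge coloring -/
noncomputable def ceZ (hdvd : (2*k+1) ∣ n) : Sym2 (ZMod n) → ZMod (2*k+1) :=
  Sym2.lift ⟨fun x y => φ hdvd (x + y) * i2 k, fun a b => by dsimp only; rw [add_comm a b]⟩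

@[simp] theorem ceZ_mk (a b : ZMod n) : ceZ hdvd s(a,b) = φ hdvd (a+b) * i2 k := rfl

theorem i2_cancel {a b : ZMod (2*k+1)} (h : a * i2 k = b * i2 k) : a = b := by
  have := congrArg (· * 2) h
  simp only [mul_assoc] at this
  rw [mul_comm (i2 k) 2, two_i2, mul_one, mul_one] at this
  exact this

theorem cvZ_shift (d x : ZMod n) : cvZ hdvd (x + d) = cvZ hdvd x + φ hdvd d := by
  simp [cvZ, map_add]

theorem ceZ_shift (d : ZMod n) (e : Sym2 (ZMod n)) :
    ceZ hdvd (Sym2.map (· + d) e) = ceZ hdvd e + φ hdvd d := by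
  induction e using Sym2.ind with
  | _ a b =>
    simp only [Sym2.map_pair_eq, ceZ_mk]
    have h1 : a + d + (b + d) = (a + b) + (d + d) := by ring
    have h2 : φ hdvd (d + d) = 2 * φ hdvd d := by rw [map_add]; ring
    rw [h1, map_add, h2, add_mul,
      show (2:ZMod (2*k+1)) * φ hdvd d * i2 k = φ hdvd d * (2 * i2 k) by ring,
      two_i2, mul_one]

theorem adj_shift (d : ZMod n) {x y : ZMod n} (h : (powerOfCycle n k).Adj x y) :
    (powerOfCycle n k).Adj (x + d) (y + d) := by
  rw [adj_iff] at h ⊢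
  obtain ⟨hne, j, h1, h2, h3⟩ := h
  refine ⟨by simpa using hne, j, h1, h2, ?_⟩
  have e1 : x + d - (y + d) = x - y := by ring
  have e2 : y + d - (x + d) = y - x := by ring
  rw [e1, e2]; exact h3

theorem edge_shift (d : ZMod n) {e : Sym2 (ZMod n)} (h : e ∈ (powerOfCycle n k).edgeSet) :
    Sym2.map (· + d) e ∈ (powerOfCycle n k).edgeSet := by
  induction e using Sym2.ind with
  | _ a b => exact adj_shift d h

noncomputable def eqv (k : ℕ) : ZMod (2*k+1) ≃ Fin (2*k+1) where
  toFun z := ⟨z.val, ZMod.val_lt z⟩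
  invFun i := ((i : ℕ) : ZMod (2*k+1))
  left_inv z := ZMod.natCast_rightInverse z
  right_inv i := by ext; exact ZMod.val_cast_of_lt i.isLt

noncomputable def cvF (hdvd : (2*k+1) ∣ n) (x : ZMod n) : Fin (2*k+1) :=
  eqv k (cvZ hdvd x)

noncomputable def ceF (hdvd : (2*k+1) ∣ n) (e : Sym2 (ZMod n)) : Fin (2*k+1) :=
  eqv k (ceZ hdvd e)

/-- extract the other endpoint of an edge -/
theorem mem_edge {V : Type*} {G : SimpleGraph V} {e : Sym2 V} (he : e ∈ G.edgeSet)
    {u : V} (hu : u ∈ e) : ∃ v, e = s(u, v) ∧ G.Adj u v := by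
  induction e using Sym2.ind with
  | _ a b =>
    rcases Sym2.mem_iff.mp hu with rfl | rfl
    · exact ⟨b, rfl, he⟩
    · exact ⟨a, Sym2.eq_swap, ((SimpleGraph.mem_edgeSet G).mp he).symm⟩

theorem cvZ_ne (hk : 1 ≤ k) {x y : ZMod n} (h : (powerOfCycle n k).Adj x y) :
    cvZ hdvd x ≠ cvZ hdvd y := by
  obtain ⟨a, ha0, hak, hxy⟩ := adj_int h
  intro hc
  have : φ hdvd (y - x) = 0 := by rw [map_sub]; rw [cvZ, cvZ] at hc; rw [hc, sub_self]
  rw [hxy, map_intCast] at this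
  exact int_ne_zero hk ha0 (by omega) this

theorem isTotal (hk : 1 ≤ k) :
    IsTotalColoring (powerOfCycle n k) (cvF hdvd) (ceF hdvd) := by
  refine ⟨fun u v huv hc => ?_, fun e₁ he₁ e₂ he₂ hne ⟨u, hu₁, hu₂⟩ hc => ?_,
    fun e he u hu hc => ?_⟩
  · exact cvZ_ne hdvd hk huv ((eqv k).injective hc)
  · obtain ⟨v, rfl, hadj₁⟩ := mem_edge he₁ hu₁
    obtain ⟨w, rfl, hadj₂⟩ := mem_edge he₂ hu₂
    have hvw : v ≠ w := fun h => hne (by rw [h])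
    have hc' : ceZ hdvd s(u,v) = ceZ hdvd s(u,w) := (eqv k).injective hc
    rw [ceZ_mk, ceZ_mk] at hc'
    have h2 : φ hdvd (u+v) = φ hdvd (u+w) := i2_cancel hc'
    obtain ⟨a₁, ha₁0, ha₁k, hv⟩ := adj_int hadj₁
    obtain ⟨a₂, ha₂0, ha₂k, hw⟩ := adj_int hadj₂
    have hd : v - w = ((a₁ - a₂ : ℤ) : ZMod n) := by
      push_cast
      rw [← hv, ← hw]; ring
    have hz : φ hdvd (v - w) = 0 := by
      rw [show v - w = (u+v) - (u+w) by ring, map_sub, h2, sub_self]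
    rw [hd, map_intCast] at hz
    have hne12 : a₁ - a₂ ≠ 0 := by
      intro h0
      apply hvw
      have : v - w = 0 := by rw [hd, h0]; simp
      linear_combination (norm := ring_nf) this
    refine int_ne_zero hk hne12 ?_ hz
    calc (a₁ - a₂).natAbs ≤ a₁.natAbs + a₂.natAbs := Int.natAbs_sub_le a₁ a₂
      _ ≤ 2 * k := by omega
  · obtain ⟨v, rfl, hadj⟩ := mem_edge he hu
    have hc' : ceZ hdvd s(u,v) = cvZ hdvd u := (eqv k).injective hc
    rw [ceZ_mk] at hc'
    have h2u : cvZ hdvd u = (2 * φ hdvd u) * i2 k := by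
      rw [cvZ, show (2 * φ hdvd u) * i2 k = φ hdvd u * (2 * i2 k) by ring, two_i2, mul_one]
    rw [h2u] at hc'
    have h3 : φ hdvd (u + v) = 2 * φ hdvd u := i2_cancel hc'
    obtain ⟨a, ha0, hak, hv⟩ := adj_int hadj
    have hz : φ hdvd (v - u) = 0 := by
      rw [show v - u = (u+v) - (u+u) by ring, map_sub, h3, map_add]; ring
    rw [hv, map_intCast] at hz
    exact int_ne_zero hk ha0 (by omega) hz

theorem vclass_eq (d : ZMod n) (γ : ZMod (2*k+1)) :
    {x : ZMod n | cvZ hdvd x = γ + φ hdvd d} = (· + d) '' {x : ZMod n | cvZ hdvd x = γ} := by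
  ext x
  simp only [Set.mem_setOf_eq, Set.mem_image]
  constructor
  · intro h
    refine ⟨x - d, ?_, by ring⟩
    have := cvZ_shift hdvd d (x - d)
    rw [sub_add_cancel] at this
    rw [this] at h
    exact add_right_cancel h
  · rintro ⟨y, hy, rfl⟩
    rw [cvZ_shift, hy]

theorem eclass_eq (d : ZMod n) (γ : ZMod (2*k+1)) :
    {e : Sym2 (ZMod n) | e ∈ (powerOfCycle n k).edgeSet ∧ ceZ hdvd e = γ + φ hdvd d} =
      Sym2.map (· + d) '' {e : Sym2 (ZMod n) | e ∈ (powerOfCycle n k).edgeSet ∧ ceZ hdvd e = γ} := by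
  have hcomp : ∀ e : Sym2 (ZMod n), Sym2.map (· + d) (Sym2.map (· + (-d)) e) = e := by
    intro e
    rw [Sym2.map_map]
    have : ((· + d) ∘ (· + (-d))) = (id : ZMod n → ZMod n) := by
      funext x; simp
    rw [this, Sym2.map_id, id]
  ext e
  simp only [Set.mem_setOf_eq, Set.mem_image]
  constructor
  · rintro ⟨he, hc⟩
    refine ⟨Sym2.map (· + (-d)) e, ⟨edge_shift (-d) he, ?_⟩, hcomp e⟩
    rw [ceZ_shift, hc, map_neg]; ring
  · rintro ⟨f, ⟨hf, hc⟩, rfl⟩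
    exact ⟨edge_shift d hf, by rw [ceZ_shift, hc]⟩

theorem class_size_eq (c c' : Fin (2*k+1)) :
    totalClassSize (powerOfCycle n k) (cvF hdvd) (ceF hdvd) c =
      totalClassSize (powerOfCycle n k) (cvF hdvd) (ceF hdvd) c' := by
  set γ := (eqv k).symm c with hγ
  set γ' := (eqv k).symm c' with hγ'
  set d : ZMod n := (((γ' - γ).val : ℕ) : ZMod n) with hd
  have hφd : φ hdvd d = γ' - γ := by
    rw [hd, map_natCast]
    exact ZMod.natCast_rightInverse _
  have hvset : ∀ b : Fin (2*k+1), {x : ZMod n | cvF hdvd x = b} = {x : ZMod n | cvZ hdvd x = (eqv k).symm b} := by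
    intro b; ext x
    simp only [Set.mem_setOf_eq, cvF, Equiv.apply_eq_iff_eq_symm_apply]
  have heset : ∀ b : Fin (2*k+1),
      {e : Sym2 (ZMod n) | e ∈ (powerOfCycle n k).edgeSet ∧ ceF hdvd e = b} =
        {e : Sym2 (ZMod n) | e ∈ (powerOfCycle n k).edgeSet ∧ ceZ hdvd e = (eqv k).symm b} := by
    intro b; ext e
    simp only [Set.mem_setOf_eq, ceF, Equiv.apply_eq_iff_eq_symm_apply]
  have hγ'' : γ' = γ + φ hdvd d := by rw [hφd]; ring
  unfold totalClassSize
  rw [hvset, hvset, heset, heset, ← hγ, ← hγ', hγ'', vclass_eq, eclass_eq,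
    Set.ncard_image_of_injective _ (add_left_injective d),
    Set.ncard_image_of_injective _ (Sym2.map.injective (add_left_injective d))]

theorem isEquitable (hk : 1 ≤ k) :
    IsEquitableTotalColoring (powerOfCycle n k) (cvF hdvd) (ceF hdvd) := by
  refine ⟨isTotal hdvd hk, fun c c' => ?_⟩
  rw [class_size_eq hdvd c c']
  omega

theorem lower_bound (hk : 1 ≤ k) (hkn : 2 * k < n) {t : ℕ}
    (cv : ZMod n → Fin t) (ce : Sym2 (ZMod n) → Fin t)
    (h : IsTotalColoring (powerOfCycle n k) cv ce) : 2 * k + 1 ≤ t := by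
  haveI : NeZero n := ⟨by omega⟩
  classical
  obtain ⟨hv, he, hev⟩ := h
  have hcast : ∀ j ∈ Finset.Icc 1 k, ∀ j' ∈ Finset.Icc 1 k,
      ((j:ℕ) : ZMod n) = ((j':ℕ) : ZMod n) → j = j' := by
    intro j hj j' hj' hjj
    simp only [Finset.mem_Icc] at hj hj'
    have := congrArg ZMod.val hjj
    rwa [ZMod.val_cast_of_lt (by omega), ZMod.val_cast_of_lt (by omega)] at this
  have hcast0 : ∀ j ∈ Finset.Icc 1 k, ((j:ℕ) : ZMod n) ≠ 0 := by
    intro j hj h0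
    simp only [Finset.mem_Icc] at hj
    rw [ZMod.natCast_eq_zero_iff] at h0
    have := Nat.le_of_dvd (by omega) h0
    omega
  have hsum0 : ∀ j ∈ Finset.Icc 1 k, ∀ j' ∈ Finset.Icc 1 k,
      ((j:ℕ) : ZMod n) ≠ -((j':ℕ) : ZMod n) := by
    intro j hj j' hj' hjj
    simp only [Finset.mem_Icc] at hj hj'
    have h0 : ((j + j' : ℕ) : ZMod n) = 0 := by
      push_cast
      rw [hjj]; ring
    rw [ZMod.natCast_eq_zero_iff] at h0
    have := Nat.le_of_dvd (by omega) h0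
    omega
  set E1 : Finset (Sym2 (ZMod n)) :=
    (Finset.Icc 1 k).image (fun j => s((0:ZMod n), ((j:ℕ) : ZMod n))) with hE1
  set E2 : Finset (Sym2 (ZMod n)) :=
    (Finset.Icc 1 k).image (fun j => s((0:ZMod n), -((j:ℕ) : ZMod n))) with hE2
  have hcard1 : E1.card = k := by
    rw [hE1, Finset.card_image_of_injOn, Nat.card_Icc]; · omega
    intro j hj j' hj' hjj
    exact hcast j hj j' hj' (Sym2.congr_right.mp hjj)
  have hcard2 : E2.card = k := by
    rw [hE2, Finset.card_image_of_injOn, Nat.card_Icc]; · omega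
    intro j hj j' hj' hjj
    have := Sym2.congr_right.mp hjj
    exact hcast j hj j' hj' (neg_injective this)
  have hdisj : Disjoint E1 E2 := by
    rw [Finset.disjoint_left]
    rintro e he1 he2
    rw [hE1, Finset.mem_image] at he1
    rw [hE2, Finset.mem_image] at he2
    obtain ⟨j, hj, rfl⟩ := he1
    obtain ⟨j', hj', hjj⟩ := he2
    exact hsum0 j hj j' hj' (Sym2.congr_right.mp hjj.symm)
  have hmem : ∀ e ∈ E1 ∪ E2, e ∈ (powerOfCycle n k).edgeSet ∧ (0 : ZMod n) ∈ e := by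
    intro e hmem
    rcases Finset.mem_union.mp hmem with h1 | h1
    · rw [hE1, Finset.mem_image] at h1
      obtain ⟨j, hj, rfl⟩ := h1
      refine ⟨?_, Sym2.mem_mk_left _ _⟩
      rw [SimpleGraph.mem_edgeSet, adj_iff]
      simp only [Finset.mem_Icc] at hj
      exact ⟨fun hc => hcast0 j (by simp [Finset.mem_Icc]; omega) hc.symm,
        j, hj.1, hj.2, Or.inr (by ring)⟩
    · rw [hE2, Finset.mem_image] at h1
      obtain ⟨j, hj, rfl⟩ := h1
      refine ⟨?_, Sym2.mem_mk_left _ _⟩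
      rw [SimpleGraph.mem_edgeSet, adj_iff]
      simp only [Finset.mem_Icc] at hj
      refine ⟨fun hc => hcast0 j (by simp [Finset.mem_Icc]; omega) ?_, j, hj.1, hj.2,
        Or.inl (by ring)⟩
      rw [← neg_eq_zero, hc]
  have hcardU : (E1 ∪ E2).card = 2 * k := by
    rw [Finset.card_union_of_disjoint hdisj, hcard1, hcard2]; omega
  set C : Finset (Fin t) := (E1 ∪ E2).image ce with hC
  have hcardC : C.card = 2 * k := by
    rw [hC, Finset.card_image_of_injOn, hcardU]
    intro e1 h1 e2 h2 hne
    by_contra hnee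
    exact he e1 (hmem e1 h1).1 e2 (hmem e2 h2).1 hnee
      ⟨0, (hmem e1 h1).2, (hmem e2 h2).2⟩ hne
  have hcv : cv 0 ∉ C := by
    intro hcv
    rw [hC, Finset.mem_image] at hcv
    obtain ⟨e, heC, hce⟩ := hcv
    exact hev e (hmem e heC).1 0 (hmem e heC).2 hce
  have hfinal : (insert (cv 0) C).card = 2 * k + 1 := by
    rw [Finset.card_insert_of_notMem hcv, hcardC]
  calc 2 * k + 1 = (insert (cv 0) C).card := hfinal.symm
    _ ≤ (Finset.univ : Finset (Fin t)).card := Finset.card_le_univ _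
    _ = t := by simp

end PCAux


/-- Theorem 2.2 (equitable part): if `n` is even, `1 ≤ k < n/2` and `(2k+1) ∣ n`, then the
equitable total chromatic number of `C_n^k` equals its total chromatic number, both `2k+1`. -/
theorem powerOfCycle_equitable (n k : ℕ) (hn : Even n) (hk : 1 ≤ k) (hkn : 2 * k < n)
    (hdvd : (2 * k + 1) ∣ n) :
    equitableTotalChromaticNumber (powerOfCycle n k) = totalChromaticNumber (powerOfCycle n k) ∧
    totalChromaticNumber (powerOfCycle n k) = 2 * k + 1 := by
  set Seq := {t : ℕ | ∃ cv : ZMod n → Fin t, ∃ ce : Sym2 (ZMod n) → Fin t,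
    IsEquitableTotalColoring (powerOfCycle n k) cv ce} with hSeq
  set Stot := {t : ℕ | ∃ cv : ZMod n → Fin t, ∃ ce : Sym2 (ZMod n) → Fin t,
    IsTotalColoring (powerOfCycle n k) cv ce} with hStot
  have hsub : Seq ⊆ Stot := by
    rintro t ⟨cv, ce, h, -⟩
    exact ⟨cv, ce, h⟩
  have hmem : 2 * k + 1 ∈ Seq :=
    ⟨PCAux.cvF hdvd, PCAux.ceF hdvd, PCAux.isEquitable hdvd hk⟩
  have hlb : ∀ t ∈ Stot, 2 * k + 1 ≤ t := by
    rintro t ⟨cv, ce, h⟩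
    exact PCAux.lower_bound hk hkn cv ce h
  have htot : totalChromaticNumber (powerOfCycle n k) = 2 * k + 1 := by
    refine le_antisymm (Nat.sInf_le (hsub hmem)) (hlb _ (Nat.sInf_mem ⟨_, hsub hmem⟩))
  have heqn : equitableTotalChromaticNumber (powerOfCycle n k) = 2 * k + 1 := by
    refine le_antisymm (Nat.sInf_le hmem) (hlb _ (hsub (Nat.sInf_mem ⟨_, hmem⟩)))
  exact ⟨heqn.trans htot.symm, htot⟩
end

section
/- Let n be an even positive integer and k a positive integer with 1 ≤ k < n/2 such that (2k+1) divides n. Then the neighborhood sum distinguishing total chromatic number of the power of cycle C_n^k satisfies χ''_Σ(C_n^k) ≤ 2k + 3 = Δ(C_n^k) + 3. -/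
open SimpleGraph

namespace PONSD

/-- Vertex color: `(2 v) mod (2k+1)` as an element of `Fin (2k+3)`. -/
def pcVC (n k : ℕ) (v : ZMod n) : Fin (2*k+3) :=
  ⟨(2 * ((v.val : ZMod (2*k+1)))).val, by
    exact lt_of_lt_of_le (ZMod.val_lt _) (by omega)⟩

/-- Special color used for the difference-one edge `{x, x+1}`, by parity of `x`. -/
def pcSP (n k : ℕ) (x : ZMod n) : Fin (2*k+3) :=
  if (x.val : ZMod 2) = 0 then ⟨2*k+1, by omega⟩ else ⟨2*k+2, by omega⟩

/-- Edge color function (on ordered pairs). -/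
def pcF (n k : ℕ) (x y : ZMod n) : Fin (2*k+3) :=
  if y - x = 1 then pcSP n k x
  else if x - y = 1 then pcSP n k y
  else ⟨(((x.val : ZMod (2*k+1))) + ((y.val : ZMod (2*k+1)))).val, by
    exact lt_of_lt_of_le (ZMod.val_lt _) (by omega)⟩

lemma pcF_symm (n k : ℕ) (h2 : (1 : ZMod n) + 1 ≠ 0) (x y : ZMod n) :
    pcF n k x y = pcF n k y x := by
  unfold pcF
  by_cases hxy : y - x = 1 <;> by_cases hyx : x - y = 1
  · exfalso
    have h : x - y + (y - x) = 0 := by ring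
    rw [hxy, hyx] at h
    exact h2 h
  · simp [hxy, hyx]
  · simp [hxy, hyx]
  · simp [hxy, hyx, add_comm]

/-- Edge coloring, as a function on unordered pairs. -/
def pcEC (n k : ℕ) (h2 : (1 : ZMod n) + 1 ≠ 0) : Sym2 (ZMod n) → Fin (2*k+3) :=
  Sym2.lift ⟨pcF n k, pcF_symm n k h2⟩

lemma pcEC_mk (n k : ℕ) (h2 : (1 : ZMod n) + 1 ≠ 0) (x y : ZMod n) :
    pcEC n k h2 s(x, y) = pcF n k x y := rfl

end PONSD

open PONSD in
/-- Theorem 2.2 (NSD part): if `n` is even, `1 ≤ k < n/2` and `(2k+1) ∣ n`, then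
`χ''_Σ(C_n^k) ≤ 2k + 3 = Δ + 3`. -/
theorem powerOfCycle_nsd (n k : ℕ) (hn : Even n) (hk : 1 ≤ k) (hkn : 2 * k < n)
    (hdvd : (2 * k + 1) ∣ n) :
    nsdTotalChromaticNumber (powerOfCycle n k) ≤ 2 * k + 3 := by
  classical
  have hn0 : 0 < n := by omega
  haveI : NeZero n := ⟨by omega⟩
  have h2dvd : 2 ∣ n := hn.two_dvd
  have hodd : Odd (2*k+1) := ⟨k, by omega⟩
  have hco : Nat.Coprime 2 (2*k+1) := Nat.coprime_two_left.mpr hodd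
  have h2m : 2*(2*k+1) ∣ n := hco.mul_dvd_of_dvd_of_dvd h2dvd hdvd
  have hn4 : 4*k+2 ≤ n := by have := Nat.le_of_dvd hn0 h2m; omega
  -- basic cast facts
  have castinj : ∀ a b : ℕ, a < n → b < n → ((a : ZMod n) = (b : ZMod n)) → a = b := by
    intro a b ha hb h
    have h' := congrArg ZMod.val h
    rwa [ZMod.val_cast_of_lt ha, ZMod.val_cast_of_lt hb] at h'
  have castinjm : ∀ a b : ℕ, a < 2*k+1 → b < 2*k+1 →
      ((a : ZMod (2*k+1)) = (b : ZMod (2*k+1))) → a = b := by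
    intro a b ha hb h
    have h' := congrArg ZMod.val h
    rwa [ZMod.val_cast_of_lt ha, ZMod.val_cast_of_lt hb] at h'
  have hnz : ∀ j : ℕ, 1 ≤ j → j < n → ((j : ZMod n) ≠ 0) := by
    intro j h1 hj h
    have := castinj j 0 hj (by omega) (by simpa using h)
    omega
  have hmz : ∀ j : ℕ, 1 ≤ j → j ≤ 2*k → ((j : ZMod (2*k+1)) ≠ 0) := by
    intro j h1 hj h
    have := castinjm j 0 (by omega) (by omega) (by simpa using h)
    omega
  have h2 : (1 : ZMod n) + 1 ≠ 0 := by
    have h' := hnz 2 (by omega) (by omega)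
    simpa [Nat.cast_ofNat, one_add_one_eq_two] using h'
  -- ring homs
  set φ : ZMod n →+* ZMod (2*k+1) := ZMod.castHom hdvd (ZMod (2*k+1)) with hφdef
  set π : ZMod n →+* ZMod 2 := ZMod.castHom h2dvd (ZMod 2) with hπdef
  have hφ : ∀ v : ZMod n, ((v.val : ZMod (2*k+1))) = φ v := by
    intro v; rw [ZMod.natCast_val, hφdef, ZMod.castHom_apply]
  have hπ : ∀ v : ZMod n, ((v.val : ZMod 2)) = π v := by
    intro v; rw [ZMod.natCast_val, hπdef, ZMod.castHom_apply]
  -- adjacency characterization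
  have hadj : ∀ x y : ZMod n, (powerOfCycle n k).Adj x y ↔
      x ≠ y ∧ ∃ j : ℕ, 1 ≤ j ∧ j ≤ k ∧ (x - y = (j : ZMod n) ∨ y - x = (j : ZMod n)) := by
    intro x y
    rw [powerOfCycle, fromRel_adj]
    constructor
    · rintro ⟨hne, (⟨j, ha, hb, hc⟩ | ⟨j, ha, hb, hc⟩)⟩
      · exact ⟨hne, j, ha, hb, Or.inl hc⟩
      · exact ⟨hne, j, ha, hb, Or.inr hc⟩
    · rintro ⟨hne, j, ha, hb, (hc | hc)⟩
      · exact ⟨hne, Or.inl ⟨j, ha, hb, hc⟩⟩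
      · exact ⟨hne, Or.inr ⟨j, ha, hb, hc⟩⟩
  have hAdjp : ∀ (u : ZMod n) (j : ℕ), 1 ≤ j → j ≤ k →
      (powerOfCycle n k).Adj u (u + (j : ZMod n)) := by
    intro u j h1 hjk
    rw [hadj]
    refine ⟨fun h => hnz j h1 (by omega) (left_eq_add.mp h), j, h1, hjk,
      Or.inr (by ring)⟩
  have hAdjm : ∀ (u : ZMod n) (j : ℕ), 1 ≤ j → j ≤ k →
      (powerOfCycle n k).Adj u (u - (j : ZMod n)) := by
    intro u j h1 hjk
    rw [hadj]
    refine ⟨fun h => hnz j h1 (by omega) ?_, j, h1, hjk, Or.inl (by ring)⟩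
    have := sub_eq_self.mp h.symm
    simpa using this
  have hnbr : ∀ u x : ZMod n, (powerOfCycle n k).Adj u x →
      ∃ j : ℕ, 1 ≤ j ∧ j ≤ k ∧ (x = u + (j : ZMod n) ∨ x = u - (j : ZMod n)) := by
    intro u x h
    rw [hadj] at h
    obtain ⟨hne, j, ha, hb, (hc | hc)⟩ := h
    · exact ⟨j, ha, hb, Or.inr (by rw [← hc]; ring)⟩
    · exact ⟨j, ha, hb, Or.inl (by rw [← hc]; ring)⟩
  -- 2*φ differs on neighbors
  have h2phi : ∀ u v : ZMod n, (powerOfCycle n k).Adj u v → 2 * φ u ≠ 2 * φ v := by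
    intro u v huv h
    obtain ⟨j, h1, hjk, (hc | hc)⟩ := hnbr u v huv
    · rw [hc] at h
      have : ((2*j : ℕ) : ZMod (2*k+1)) = 0 := by
        push_cast
        rw [map_add, map_natCast] at h
        linear_combination -h
      exact hmz (2*j) (by omega) (by omega) this
    · rw [hc] at h
      have : ((2*j : ℕ) : ZMod (2*k+1)) = 0 := by
        push_cast
        rw [map_sub, map_natCast] at h
        linear_combination h
      exact hmz (2*j) (by omega) (by omega) this
  -- parity special colors
  have two_cases : ∀ c : ZMod 2, c = 0 ∨ c = 1 := by decide
  have hpar : ∀ u : ZMod n, (((u-1).val : ZMod 2)) ≠ ((u.val : ZMod 2)) := by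
    intro u
    rw [hπ, hπ, map_sub, map_one]
    intro h
    have : (1 : ZMod 2) = 0 := by linear_combination -h
    exact one_ne_zero this
  have hsp_sum : ∀ u : ZMod n, (pcSP n k u).val + (pcSP n k (u-1)).val = 4*k+3 := by
    intro u
    unfold pcSP
    by_cases hu : ((u.val : ZMod 2)) = 0
    · have hu' : (((u-1).val : ZMod 2)) ≠ 0 := by rw [← hu] at *; exact hpar u
      rw [if_pos hu, if_neg hu']
      show (2*k+1) + (2*k+2) = 4*k+3
      omega
    · have hu' : (((u-1).val : ZMod 2)) = 0 := by
        rcases two_cases (((u-1).val : ZMod 2)) with h | h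
        · exact h
        · exfalso
          rcases two_cases ((u.val : ZMod 2)) with h' | h'
          · exact hu h'
          · exact hpar u (h.trans h'.symm)
      rw [if_neg hu, if_pos hu']
      show (2*k+2) + (2*k+1) = 4*k+3
      omega
  have hsp_cases : ∀ x : ZMod n, (pcSP n k x).val = 2*k+1 ∨ (pcSP n k x).val = 2*k+2 := by
    intro x
    unfold pcSP
    split
    · left; rfl
    · right; rfl
  have hsp_ne : ∀ u : ZMod n, pcSP n k u ≠ pcSP n k (u-1) := by
    intro u h
    have h' := congrArg Fin.val h
    have h'' := hsp_sum u
    rcases hsp_cases u with h3 | h3 <;> omega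
  -- edge color classification
  have hspp : ∀ u : ZMod n, pcEC n k h2 s(u, u + ((1:ℕ) : ZMod n)) = pcSP n k u := by
    intro u
    rw [pcEC_mk]
    unfold pcF
    rw [if_pos (by push_cast; ring : u + ((1:ℕ):ZMod n) - u = 1)]
  have hspm : ∀ u : ZMod n, pcEC n k h2 s(u, u - ((1:ℕ) : ZMod n)) = pcSP n k (u-1) := by
    intro u
    rw [pcEC_mk]
    unfold pcF
    have c1 : ¬(u - ((1:ℕ):ZMod n) - u = 1) := by
      intro h
      apply h2
      push_cast at h
      linear_combination -h
    rw [if_neg c1, if_pos (by push_cast; ring : u - (u - ((1:ℕ):ZMod n)) = 1)]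
    push_cast
    rfl
  have hbp : ∀ (u : ZMod n) (j : ℕ), 2 ≤ j → j ≤ k →
      (pcEC n k h2 s(u, u + (j : ZMod n))).val = (2 * φ u + (j : ZMod (2*k+1))).val := by
    intro u j hj2 hjk
    rw [pcEC_mk]
    unfold pcF
    have c1 : ¬(u + (j:ZMod n) - u = 1) := by
      intro h
      have hj : ((j:ℕ) : ZMod n) = ((1:ℕ) : ZMod n) := by
        push_cast
        linear_combination h
      have := castinj j 1 (by omega) (by omega) hj
      omega
    have c2 : ¬(u - (u + (j:ZMod n)) = 1) := by
      intro h
      have : ((j+1 : ℕ) : ZMod n) = 0 := by push_cast; linear_combination -h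
      exact hnz (j+1) (by omega) (by omega) this
    rw [if_neg c1, if_neg c2]
    show ((u.val : ZMod (2*k+1)) + (((u + (j:ZMod n)).val : ZMod (2*k+1)))).val = _
    rw [hφ, hφ]
    congr 1
    rw [map_add, map_natCast]
    ring
  have hbm : ∀ (u : ZMod n) (j : ℕ), 2 ≤ j → j ≤ k →
      (pcEC n k h2 s(u, u - (j : ZMod n))).val = (2 * φ u - (j : ZMod (2*k+1))).val := by
    intro u j hj2 hjk
    rw [pcEC_mk]
    unfold pcF
    have c1 : ¬(u - (j:ZMod n) - u = 1) := by
      intro h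
      have : ((j+1 : ℕ) : ZMod n) = 0 := by push_cast; linear_combination -h
      exact hnz (j+1) (by omega) (by omega) this
    have c2 : ¬(u - (u - (j:ZMod n)) = 1) := by
      intro h
      have hj : ((j:ℕ) : ZMod n) = ((1:ℕ) : ZMod n) := by
        push_cast
        linear_combination h
      have := castinj j 1 (by omega) (by omega) hj
      omega
    rw [if_neg c1, if_neg c2]
    show ((u.val : ZMod (2*k+1)) + (((u - (j:ZMod n)).val : ZMod (2*k+1)))).val = _
    rw [hφ, hφ]
    congr 1
    rw [map_sub, map_natCast]
    ring
  -- Gauss-type sum over ZMod (2k+1)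
  have hvcast : ∀ x : ZMod (2*k+1), ((x.val : ℕ) : ZMod (2*k+1)) = x := by
    intro x
    rw [ZMod.natCast_val, ZMod.cast_id]
  have G2 : ∑ i ∈ Finset.range (2*k+1), i = k*(2*k+1) := by
    have h1 : (∑ i ∈ Finset.range (2*k+1), i) * 2 = (k*(2*k+1)) * 2 := by
      rw [Finset.sum_range_id_mul_two, show (2*k+1)-1 = 2*k from by omega]
      ring
    omega
  have G1 : ∀ c : ZMod (2*k+1),
      ∑ i ∈ Finset.range (2*k+1), (c + (i : ZMod (2*k+1))).val = k*(2*k+1) := by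
    intro c
    rw [← G2]
    refine Finset.sum_nbij' (fun a => (c + (a : ZMod (2*k+1))).val)
      (fun b => (((b : ZMod (2*k+1))) - c).val) ?_ ?_ ?_ ?_ ?_
    · intro a ha
      exact Finset.mem_range.mpr (ZMod.val_lt _)
    · intro b hb
      exact Finset.mem_range.mpr (ZMod.val_lt _)
    · intro a ha
      rw [hvcast, add_sub_cancel_left, ZMod.val_cast_of_lt (Finset.mem_range.mp ha)]
    · intro b hb
      have h3 : c + (((b : ZMod (2*k+1))) - c) = (b : ZMod (2*k+1)) := by ring
      rw [hvcast, h3, ZMod.val_cast_of_lt (Finset.mem_range.mp hb)]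
    · intro a ha
      rfl
  have G3 : Finset.range (2*k+1) =
      insert 0 (Finset.Icc 1 k ∪ Finset.Icc (k+1) (2*k)) := by
    ext a
    simp only [Finset.mem_range, Finset.mem_insert, Finset.mem_union, Finset.mem_Icc]
    omega
  have G4 : ∀ c : ZMod (2*k+1),
      ∑ i ∈ Finset.Icc (k+1) (2*k), (c + (i : ZMod (2*k+1))).val
        = ∑ j ∈ Finset.Icc 1 k, (c - (j : ZMod (2*k+1))).val := by
    intro c
    refine Finset.sum_nbij' (fun a => 2*k+1-a) (fun b => 2*k+1-b) ?_ ?_ ?_ ?_ ?_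
    · intro a ha
      simp only [Finset.mem_Icc] at *
      omega
    · intro b hb
      simp only [Finset.mem_Icc] at *
      omega
    · intro a ha
      simp only [Finset.mem_Icc] at ha
      omega
    · intro b hb
      simp only [Finset.mem_Icc] at hb
      omega
    · intro a ha
      simp only [Finset.mem_Icc] at ha
      have hcast : ((2*k+1-a : ℕ) : ZMod (2*k+1)) = -((a : ℕ) : ZMod (2*k+1)) := by
        have h1 : ((2*k+1-a : ℕ) : ZMod (2*k+1)) + ((a : ℕ) : ZMod (2*k+1))
            = ((2*k+1 : ℕ) : ZMod (2*k+1)) := by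
          rw [← Nat.cast_add]
          congr 1
          omega
        rw [ZMod.natCast_self] at h1
        linear_combination h1
      rw [hcast, sub_neg_eq_add]
  have hGauss : ∀ c : ZMod (2*k+1),
      c.val + ∑ j ∈ Finset.Icc 1 k,
        ((c + (j : ZMod (2*k+1))).val + (c - (j : ZMod (2*k+1))).val) = k*(2*k+1) := by
    intro c
    have e1 := G1 c
    rw [G3, Finset.sum_insert (by simp only [Finset.mem_union, Finset.mem_Icc]; omega),
      Finset.sum_union (by
        simp only [Finset.disjoint_left, Finset.mem_Icc]
        omega), G4] at e1
    simp only [Nat.cast_zero, add_zero] at e1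
    rw [Finset.sum_add_distrib]
    omega
  -- injectivity of a ↦ a.val + (a+2).val
  have hvadd2 : ∀ x : ZMod (2*k+1), (x + 2).val = (x.val + 2) % (2*k+1) := by
    intro x
    have h1 : x + 2 = ((x.val + 2 : ℕ) : ZMod (2*k+1)) := by
      rw [Nat.cast_add, hvcast]
      norm_num
    rw [h1, ZMod.val_natCast]
  have hginj : ∀ a b : ZMod (2*k+1), a ≠ b →
      a.val + (a + 2).val ≠ b.val + (b + 2).val := by
    intro a b hne h
    rw [hvadd2, hvadd2] at h
    have ha := ZMod.val_lt a
    have hb := ZMod.val_lt b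
    have hne' : a.val ≠ b.val := fun hh => hne (ZMod.val_injective _ hh)
    have wa : (a.val + 2) % (2*k+1) = a.val + 2
        ∨ (a.val + 2) % (2*k+1) + (2*k+1) = a.val + 2 := by
      rcases Nat.lt_or_ge (a.val + 2) (2*k+1) with hlt | hge
      · left
        exact Nat.mod_eq_of_lt hlt
      · right
        rw [Nat.mod_eq_sub_mod hge, Nat.mod_eq_of_lt (by omega)]
        omega
    have wb : (b.val + 2) % (2*k+1) = b.val + 2
        ∨ (b.val + 2) % (2*k+1) + (2*k+1) = b.val + 2 := by
      rcases Nat.lt_or_ge (b.val + 2) (2*k+1) with hlt | hge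
      · left
        exact Nat.mod_eq_of_lt hlt
      · right
        rw [Nat.mod_eq_sub_mod hge, Nat.mod_eq_of_lt (by omega)]
        omega
    set wA := (a.val + 2) % (2*k+1) with hwA
    set wB := (b.val + 2) % (2*k+1) with hwB
    clear_value wA wB
    omega
  -- representation of incident edges
  have hrep : ∀ e ∈ (powerOfCycle n k).edgeSet, ∀ u : ZMod n, u ∈ e →
      ∃ x : ZMod n, (powerOfCycle n k).Adj u x ∧ e = s(u, x) := by
    intro e
    induction e with
    | _ a b =>
      intro he u hu
      rw [SimpleGraph.mem_edgeSet] at he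
      rw [Sym2.mem_iff] at hu
      rcases hu with rfl | rfl
      · exact ⟨b, he, rfl⟩
      · exact ⟨a, he.symm, Sym2.eq_swap⟩
  have hinc : ∀ u : ZMod n, (powerOfCycle n k).incidenceSet u =
      ↑(((Finset.Icc 1 k).image (fun j : ℕ => s(u, u + (j : ZMod n))))
        ∪ ((Finset.Icc 1 k).image (fun j : ℕ => s(u, u - (j : ZMod n))))) := by
    intro u
    ext e
    constructor
    · intro he
      obtain ⟨he1, he2⟩ := he
      obtain ⟨x, hx, rfl⟩ := hrep e he1 u he2
      obtain ⟨j, h1, hjk, hc | hc⟩ := hnbr u x hx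
      · exact Finset.mem_coe.mpr (Finset.mem_union_left _ (Finset.mem_image.mpr
          ⟨j, Finset.mem_Icc.mpr ⟨h1, hjk⟩, by rw [hc]⟩))
      · exact Finset.mem_coe.mpr (Finset.mem_union_right _ (Finset.mem_image.mpr
          ⟨j, Finset.mem_Icc.mpr ⟨h1, hjk⟩, by rw [hc]⟩))
    · intro he
      rcases Finset.mem_union.mp (Finset.mem_coe.mp he) with h | h
      · obtain ⟨j, hj, rfl⟩ := Finset.mem_image.mp h
        rw [Finset.mem_Icc] at hj
        exact ((powerOfCycle n k).mem_incidenceSet u _).mpr (hAdjp u j hj.1 hj.2)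
      · obtain ⟨j, hj, rfl⟩ := Finset.mem_image.mp h
        rw [Finset.mem_Icc] at hj
        exact ((powerOfCycle n k).mem_incidenceSet u _).mpr (hAdjm u j hj.1 hj.2)
  have hvcu : ∀ u : ZMod n, (pcVC n k u).val = (2 * φ u).val := by
    intro u
    show (2 * ((u.val : ZMod (2*k+1)))).val = _
    rw [hφ]
  have hIcc : Finset.Icc 1 k = insert 1 (Finset.Icc 2 k) := by
    ext a
    simp only [Finset.mem_Icc, Finset.mem_insert]
    omega
  have hone : (1:ℕ) ∉ Finset.Icc 2 k := by
    simp [Finset.mem_Icc]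
  -- evaluation of the color sum
  have hsum_val : ∀ u : ZMod n,
      nsdSum (powerOfCycle n k) (pcVC n k) (pcEC n k h2) u
        + ((2 * φ u + 1).val + (2 * φ u - 1).val) = k*(2*k+1) + 6*k + 4 := by
    intro u
    have hdisj : Disjoint ((Finset.Icc 1 k).image (fun j : ℕ => s(u, u + (j : ZMod n))))
        ((Finset.Icc 1 k).image (fun j : ℕ => s(u, u - (j : ZMod n)))) := by
      rw [Finset.disjoint_left]
      intro e hep hem
      obtain ⟨j₁, hj₁, he₁⟩ := Finset.mem_image.mp hep
      obtain ⟨j₂, hj₂, he₂⟩ := Finset.mem_image.mp hem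
      rw [Finset.mem_Icc] at hj₁ hj₂
      rcases Sym2.eq_iff.mp (he₁.trans he₂.symm) with ⟨_, hh⟩ | ⟨hh, _⟩
      · have : ((j₁+j₂ : ℕ) : ZMod n) = 0 := by push_cast; linear_combination hh
        exact hnz _ (by omega) (by omega) this
      · have : ((j₂ : ℕ) : ZMod n) = 0 := by linear_combination hh
        exact hnz _ (by omega) (by omega) this
    have hinjp : ∀ x ∈ Finset.Icc 1 k, ∀ y ∈ Finset.Icc 1 k,
        s(u, u + (x : ZMod n)) = s(u, u + (y : ZMod n)) → x = y := by
      intro x hx y hy h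
      rw [Finset.mem_Icc] at hx hy
      rcases Sym2.eq_iff.mp h with ⟨_, hh⟩ | ⟨hh, _⟩
      · exact castinj x y (by omega) (by omega) (add_left_cancel hh)
      · exfalso
        have : ((y : ℕ) : ZMod n) = 0 := by linear_combination -hh
        exact hnz _ (by omega) (by omega) this
    have hinjm : ∀ x ∈ Finset.Icc 1 k, ∀ y ∈ Finset.Icc 1 k,
        s(u, u - (x : ZMod n)) = s(u, u - (y : ZMod n)) → x = y := by
      intro x hx y hy h
      rw [Finset.mem_Icc] at hx hy
      rcases Sym2.eq_iff.mp h with ⟨_, hh⟩ | ⟨hh, _⟩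
      · have : ((x : ℕ) : ZMod n) = ((y : ℕ) : ZMod n) := by linear_combination -hh
        exact castinj x y (by omega) (by omega) this
      · exfalso
        have : ((y : ℕ) : ZMod n) = 0 := by linear_combination hh
        exact hnz _ (by omega) (by omega) this
    unfold nsdSum
    rw [hinc u, finsum_mem_coe_finset, Finset.sum_union hdisj,
      Finset.sum_image hinjp, Finset.sum_image hinjm, hIcc,
      Finset.sum_insert hone, Finset.sum_insert hone]
    rw [hspp u, hspm u]
    have hcp : ∀ j ∈ Finset.Icc 2 k,
        ((pcEC n k h2 s(u, u + (j : ZMod n))).val + 1)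
          = ((2 * φ u + (j : ZMod (2*k+1))).val + 1) := by
      intro j hj
      rw [Finset.mem_Icc] at hj
      rw [hbp u j hj.1 hj.2]
    have hcm : ∀ j ∈ Finset.Icc 2 k,
        ((pcEC n k h2 s(u, u - (j : ZMod n))).val + 1)
          = ((2 * φ u - (j : ZMod (2*k+1))).val + 1) := by
      intro j hj
      rw [Finset.mem_Icc] at hj
      rw [hbm u j hj.1 hj.2]
    rw [Finset.sum_congr rfl hcp, Finset.sum_congr rfl hcm]
    have hg := hGauss (2 * φ u)
    rw [hIcc, Finset.sum_insert hone] at hg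
    simp only [Nat.cast_one] at hg
    rw [Finset.sum_add_distrib] at hg
    rw [Finset.sum_add_distrib, Finset.sum_add_distrib, Finset.sum_const,
      smul_eq_mul, mul_one, Nat.card_Icc]
    have hsc := hsp_sum u
    have hvu := hvcu u
    have hcard : k + 1 - 2 = k - 1 := by omega
    omega
  -- proper vertex coloring
  have cond1 : ∀ u v : ZMod n, (powerOfCycle n k).Adj u v → pcVC n k u ≠ pcVC n k v := by
    intro u v huv h
    apply h2phi u v huv
    apply ZMod.val_injective
    have hv := congrArg Fin.val h
    rw [hvcu u, hvcu v] at hv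
    exact hv
  -- helper : special color value differs from any base value
  have hsb : ∀ (x : ZMod n) (c : ZMod (2*k+1)), (pcSP n k x).val ≠ c.val := by
    intro x c
    have h1 := hsp_cases x
    have h2' := ZMod.val_lt c
    omega
  -- proper edge coloring
  have cond2 : ∀ e₁ ∈ (powerOfCycle n k).edgeSet, ∀ e₂ ∈ (powerOfCycle n k).edgeSet,
      e₁ ≠ e₂ → (∃ u : ZMod n, u ∈ e₁ ∧ u ∈ e₂) →
      pcEC n k h2 e₁ ≠ pcEC n k h2 e₂ := by
    rintro e₁ he₁ e₂ he₂ hne ⟨u, hu₁, hu₂⟩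
    obtain ⟨x₁, hx₁, rfl⟩ := hrep e₁ he₁ u hu₁
    obtain ⟨x₂, hx₂, rfl⟩ := hrep e₂ he₂ u hu₂
    have hxne : x₁ ≠ x₂ := fun h => hne (by rw [h])
    obtain ⟨j₁, ha₁, hb₁, hc₁⟩ := hnbr u x₁ hx₁
    obtain ⟨j₂, ha₂, hb₂, hc₂⟩ := hnbr u x₂ hx₂
    intro hEq
    have hv := congrArg Fin.val hEq
    rcases hc₁ with rfl | rfl <;> rcases hc₂ with rfl | rfl
    · -- plus / plus
      by_cases hj₁ : j₁ = 1 <;> by_cases hj₂ : j₂ = 1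
      · subst hj₁; subst hj₂
        exact hxne rfl
      · subst hj₁
        rw [hspp u, hbp u j₂ (by omega) hb₂] at hv
        exact hsb u _ hv
      · subst hj₂
        rw [hspp u, hbp u j₁ (by omega) hb₁] at hv
        exact hsb u _ hv.symm
      · rw [hbp u j₁ (by omega) hb₁, hbp u j₂ (by omega) hb₂] at hv
        have h3 := add_left_cancel (ZMod.val_injective _ hv)
        have := castinjm j₁ j₂ (by omega) (by omega) h3
        exact hxne (by rw [this])
    · -- plus / minus
      by_cases hj₁ : j₁ = 1 <;> by_cases hj₂ : j₂ = 1
      · subst hj₁; subst hj₂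
        rw [hspp u, hspm u] at hEq
        exact hsp_ne u hEq
      · subst hj₁
        rw [hspp u, hbm u j₂ (by omega) hb₂] at hv
        exact hsb u _ hv
      · subst hj₂
        rw [hspm u, hbp u j₁ (by omega) hb₁] at hv
        exact hsb (u-1) _ hv.symm
      · rw [hbp u j₁ (by omega) hb₁, hbm u j₂ (by omega) hb₂] at hv
        have h3 := ZMod.val_injective _ hv
        have h4 : ((j₁ + j₂ : ℕ) : ZMod (2*k+1)) = 0 := by
          push_cast
          linear_combination h3
        exact hmz _ (by omega) (by omega) h4
    · -- minus / plus
      by_cases hj₁ : j₁ = 1 <;> by_cases hj₂ : j₂ = 1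
      · subst hj₁; subst hj₂
        rw [hspp u, hspm u] at hEq
        exact hsp_ne u hEq.symm
      · subst hj₁
        rw [hspm u, hbp u j₂ (by omega) hb₂] at hv
        exact hsb (u-1) _ hv
      · subst hj₂
        rw [hspp u, hbm u j₁ (by omega) hb₁] at hv
        exact hsb u _ hv.symm
      · rw [hbm u j₁ (by omega) hb₁, hbp u j₂ (by omega) hb₂] at hv
        have h3 := ZMod.val_injective _ hv
        have h4 : ((j₁ + j₂ : ℕ) : ZMod (2*k+1)) = 0 := by
          push_cast
          linear_combination -h3
        exact hmz _ (by omega) (by omega) h4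
    · -- minus / minus
      by_cases hj₁ : j₁ = 1 <;> by_cases hj₂ : j₂ = 1
      · subst hj₁; subst hj₂
        exact hxne rfl
      · subst hj₁
        rw [hspm u, hbm u j₂ (by omega) hb₂] at hv
        exact hsb (u-1) _ hv
      · subst hj₂
        rw [hspm u, hbm u j₁ (by omega) hb₁] at hv
        exact hsb (u-1) _ hv.symm
      · rw [hbm u j₁ (by omega) hb₁, hbm u j₂ (by omega) hb₂] at hv
        have h3 := ZMod.val_injective _ hv
        have h4 : ((j₁ : ℕ) : ZMod (2*k+1)) = ((j₂ : ℕ) : ZMod (2*k+1)) := by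
          linear_combination -h3
        have := castinjm j₁ j₂ (by omega) (by omega) h4
        exact hxne (by rw [this])
  -- edge colors differ from endpoint colors
  have cond3 : ∀ e ∈ (powerOfCycle n k).edgeSet, ∀ u : ZMod n, u ∈ e →
      pcEC n k h2 e ≠ pcVC n k u := by
    intro e he u hu
    obtain ⟨x, hx, rfl⟩ := hrep e he u hu
    obtain ⟨j, ha, hb, hc | hc⟩ := hnbr u x hx
    · subst hc
      intro hEq
      have hv := congrArg Fin.val hEq
      rw [hvcu u] at hv
      by_cases hj : j = 1
      · subst hj
        rw [hspp u] at hv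
        exact hsb u _ hv
      · rw [hbp u j (by omega) hb] at hv
        have h3 := ZMod.val_injective _ hv
        have h4 : ((j : ℕ) : ZMod (2*k+1)) = 0 := by linear_combination h3
        exact hmz _ (by omega) (by omega) h4
    · subst hc
      intro hEq
      have hv := congrArg Fin.val hEq
      rw [hvcu u] at hv
      by_cases hj : j = 1
      · subst hj
        rw [hspm u] at hv
        exact hsb (u-1) _ hv
      · rw [hbm u j (by omega) hb] at hv
        have h3 := ZMod.val_injective _ hv
        have h4 : ((j : ℕ) : ZMod (2*k+1)) = 0 := by linear_combination -h3
        exact hmz _ (by omega) (by omega) h4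
  -- neighbor sums distinct
  have cond4 : ∀ u v : ZMod n, (powerOfCycle n k).Adj u v →
      nsdSum (powerOfCycle n k) (pcVC n k) (pcEC n k h2) u
        ≠ nsdSum (powerOfCycle n k) (pcVC n k) (pcEC n k h2) v := by
    intro u v huv hEq
    have h1 := hsum_val u
    have h2' := hsum_val v
    have hab : 2*φ u - 1 ≠ 2*φ v - 1 := fun h => h2phi u v huv (by linear_combination h)
    have h3 := hginj _ _ hab
    rw [show 2*φ u - 1 + 2 = 2*φ u + 1 from by ring,
      show 2*φ v - 1 + 2 = 2*φ v + 1 from by ring] at h3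
    omega
  exact Nat.sInf_le ⟨pcVC n k, pcEC n k h2, ⟨cond1, cond2, cond3⟩, cond4⟩
end

section
/- Let n be an even positive integer and let G = Cay(Z_n, S) be a circulant graph whose symmetric connection set S ⊆ Z_n \ {0} satisfies |S| = n/2 − 2, n/2 ∉ S, and s + s' ≠ n/2 (mod n) for all s, s' ∈ S. Then the total chromatic number of G satisfies χ''(G) ≤ n/2 + 1 = Δ(G) + 3. -/
open SimpleGraph

/-- Theorem 3.2: a circulant graph of even order `n` with connection set `S` of size
`n/2 - 2`, with `n/2 ∉ S` and `s + s' ≠ n/2` for all `s, s' ∈ S`, has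
`χ''(G) ≤ n/2 + 1 = Δ + 3`. -/
theorem circulant_half_minus_two (n : ℕ) (hn : 0 < n) (heven : Even n)
    (S : Finset (ZMod n)) (hsym : ∀ s ∈ S, -s ∈ S) (h0 : (0 : ZMod n) ∉ S)
    (hcard : S.card = n / 2 - 2) (hinv : ((n / 2 : ℕ) : ZMod n) ∉ S)
    (hsum : ∀ s ∈ S, ∀ s' ∈ S, s + s' ≠ ((n / 2 : ℕ) : ZMod n)) :
    totalChromaticNumber (cayley n S) ≤ n / 2 + 1 := by
  
  classical
  haveI : NeZero n := ⟨hn.ne'⟩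
  set m := n / 2 with hmdef
  have hm2 : n = 2 * m := by obtain ⟨r, hr⟩ := heven; omega
  have hmpos : 0 < m := by omega
  have hvalcast : ∀ x : ZMod n, ((x.val : ℕ) : ZMod n) = x := fun x =>
    ZMod.natCast_zmod_val x
  have hadj_mem : ∀ u v : ZMod n, (cayley n S).Adj u v → v - u ∈ S := by
    intro u v h
    rw [cayley, SimpleGraph.fromRel_adj] at h
    rcases h.2 with h' | h'
    · have := hsym _ h'
      rwa [neg_sub] at this
    · exact h'
  have lemA : ∀ x y : ZMod n, x.val % m = y.val % m →
      x = y ∨ x = y + ((m : ℕ) : ZMod n) ∨ y = x + ((m : ℕ) : ZMod n) := by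
    intro x y h
    have hx := ZMod.val_lt x
    have hy := ZMod.val_lt y
    have hxm : x.val % m < m := Nat.mod_lt _ hmpos
    have hym : y.val % m < m := Nat.mod_lt _ hmpos
    have hsplit : ∀ z : ZMod n, z.val % m = z.val ∨ z.val % m + m = z.val := by
      intro z
      rcases lt_or_ge z.val m with hlt | hge
      · left; exact Nat.mod_eq_of_lt hlt
      · right
        have hz := ZMod.val_lt z
        have h1 : z.val % m = (z.val - m) % m := Nat.mod_eq_sub_mod hge
        have h2 : (z.val - m) % m = z.val - m := Nat.mod_eq_of_lt (by omega)
        omega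
    have hxs := hsplit x
    have hys := hsplit y
    have hcases : x.val = y.val ∨ x.val = y.val + m ∨ y.val = x.val + m := by omega
    rcases hcases with h1 | h1 | h1
    · left
      rw [← hvalcast x, ← hvalcast y, h1]
    · right; left
      calc x = ((x.val : ℕ) : ZMod n) := (hvalcast x).symm
        _ = ((y.val + m : ℕ) : ZMod n) := by rw [h1]
        _ = y + ((m : ℕ) : ZMod n) := by
            push_cast
            rw [hvalcast y]
    · right; right
      calc y = ((y.val : ℕ) : ZMod n) := (hvalcast y).symm
        _ = ((x.val + m : ℕ) : ZMod n) := by rw [h1]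
        _ = x + ((m : ℕ) : ZMod n) := by
            push_cast
            rw [hvalcast x]
  have hpi_ne : ∀ u v : ZMod n, (cayley n S).Adj u v → u.val % m ≠ v.val % m := by
    intro u v hadj h
    have hne : u ≠ v := hadj.ne
    rcases lemA u v h with h1 | h1 | h1
    · exact hne h1
    · have hmem := hadj_mem u v hadj
      have hvu : v - u = -((m : ℕ) : ZMod n) := by rw [h1]; ring
      rw [hvu] at hmem
      have := hsym _ hmem
      rw [neg_neg] at this
      exact hinv this
    · have hmem := hadj_mem u v hadj
      have hvu : v - u = ((m : ℕ) : ZMod n) := by rw [h1]; ring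
      rw [hvu] at hmem
      exact hinv hmem
  -- S has even cardinality (neg is a fixed-point-free involution on S)
  have hnofix : ∀ s ∈ S, -s ≠ s := by
    intro s hs hfx
    have h2 : s + s = 0 := by
      nth_rewrite 2 [← hfx]
      exact add_neg_cancel s
    have hcast : ((s.val + s.val : ℕ) : ZMod n) = 0 := by
      push_cast
      rw [hvalcast s]
      exact h2
    rw [ZMod.natCast_eq_zero_iff] at hcast
    obtain ⟨k, hk⟩ := hcast
    have hvlt := ZMod.val_lt s
    have hk2 : k < 2 := by
      by_contra hge
      push_neg at hge
      have hle : n * 2 ≤ n * k := Nat.mul_le_mul_left n hge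
      rw [← hk] at hle
      omega
    rcases (by omega : k = 0 ∨ k = 1) with rfl | rfl
    · have hv0 : s.val = 0 := by omega
      have : s = 0 := by rw [← hvalcast s, hv0]; simp
      rw [this] at hs
      exact h0 hs
    · have hsv : s.val = m := by omega
      have : s = ((m : ℕ) : ZMod n) := by rw [← hvalcast s, hsv]
      rw [this] at hs
      exact hinv hs
  have keyEven : ∀ N : ℕ, ∀ T : Finset (ZMod n), T.card ≤ N → (∀ s ∈ T, -s ∈ T) →
      (∀ s ∈ T, -s ≠ s) → Even T.card := by
    intro N
    induction N with
    | zero =>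
      intro T hT _ _
      rw [Nat.le_zero] at hT
      rw [hT]
      exact Even.zero
    | succ N ih =>
      intro T hT hsymT hfixT
      rcases T.eq_empty_or_nonempty with rfl | ⟨s, hs⟩
      · simp
      · have h1 : -s ∈ T := hsymT s hs
        have h2 : -s ≠ s := hfixT s hs
        have h1' : -s ∈ T.erase s := Finset.mem_erase.mpr ⟨h2, h1⟩
        have hc1 : (T.erase s).card = T.card - 1 := Finset.card_erase_of_mem hs
        have hc2 : ((T.erase s).erase (-s)).card = (T.erase s).card - 1 :=
          Finset.card_erase_of_mem h1'
        have hcpos : 1 ≤ (T.erase s).card := Finset.card_pos.mpr ⟨-s, h1'⟩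
        have hcpos2 : 1 ≤ T.card := Finset.card_pos.mpr ⟨s, hs⟩
        have hsymT' : ∀ t ∈ (T.erase s).erase (-s), -t ∈ (T.erase s).erase (-s) := by
          intro t ht
          rw [Finset.mem_erase, Finset.mem_erase] at ht ⊢
          refine ⟨?_, ?_, hsymT t ht.2.2⟩
          · intro hts
            exact ht.2.1 (neg_injective hts)
          · intro hts
            apply ht.1
            rw [← hts, neg_neg]
        have hfixT' : ∀ t ∈ (T.erase s).erase (-s), -t ≠ t := by
          intro t ht
          exact hfixT t (Finset.mem_of_mem_erase (Finset.mem_of_mem_erase ht))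
        have hEv := ih ((T.erase s).erase (-s)) (by omega) hsymT' hfixT'
        obtain ⟨r, hr⟩ := hEv
        exact ⟨r + 1, by omega⟩
  have hevenm : S.Nonempty → ∃ c : ℕ, m = c + c := by
    intro hne
    obtain ⟨r, hr⟩ := keyEven S.card S le_rfl hsym hnofix
    have hpos : 1 ≤ S.card := Finset.card_pos.mpr hne
    exact ⟨r + 1, by omega⟩
  have modlem : ∀ X Y : ℕ, X < 2 * (m + 1) → Y < 2 * (m + 1) →
      X % (m + 1) = Y % (m + 1) →
      X = Y ∨ X = Y + (m + 1) ∨ Y = X + (m + 1) := by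
    intro X Y hX hY h
    rcases Nat.le_total X Y with hle | hle
    · obtain ⟨k, hk⟩ := (Nat.modEq_iff_dvd' hle).mp h
      have hk2 : k < 2 := by
        by_contra hge
        push_neg at hge
        have h1 : (m + 1) * 2 ≤ (m + 1) * k := Nat.mul_le_mul_left _ hge
        rw [← hk] at h1
        omega
      rcases (by omega : k = 0 ∨ k = 1) with rfl | rfl <;> omega
    · obtain ⟨k, hk⟩ := (Nat.modEq_iff_dvd' hle).mp h.symm
      have hk2 : k < 2 := by
        by_contra hge
        push_neg at hge
        have h1 : (m + 1) * 2 ≤ (m + 1) * k := Nat.mul_le_mul_left _ hge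
        rw [← hk] at h1
        omega
      rcases (by omega : k = 0 ∨ k = 1) with rfl | rfl <;> omega
  unfold totalChromaticNumber
  apply Nat.sInf_le
  refine ⟨fun x => ⟨2 * (x.val % m) % (m + 1), Nat.mod_lt _ (by omega)⟩,
    Sym2.lift ⟨fun x y => ⟨(x.val % m + y.val % m) % (m + 1), Nat.mod_lt _ (by omega)⟩,
      fun x y => by simp [Nat.add_comm]⟩, ?_, ?_, ?_⟩
  · -- vertex condition
    intro u v huv hEq
    have hπ := hpi_ne u v huv
    have hS : S.Nonempty := ⟨v - u, hadj_mem u v huv⟩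
    obtain ⟨c, hc⟩ := hevenm hS
    have hval : 2 * (u.val % m) % (m + 1) = 2 * (v.val % m) % (m + 1) :=
      congrArg Fin.val hEq
    have hu : u.val % m < m := Nat.mod_lt _ hmpos
    have hv : v.val % m < m := Nat.mod_lt _ hmpos
    rcases modlem _ _ (by omega) (by omega) hval with h | h | h
    · exact hπ (by omega)
    · omega
    · omega
  · -- edge-edge condition
    intro e₁ he₁ e₂ he₂ hne12 hshare
    obtain ⟨u, hu1, hu2⟩ := hshare
    obtain ⟨a, rfl⟩ := Sym2.mem_iff_exists.mp hu1
    obtain ⟨b, rfl⟩ := Sym2.mem_iff_exists.mp hu2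
    rw [SimpleGraph.mem_edgeSet] at he₁ he₂
    have hab : a ≠ b := fun h => hne12 (by rw [h])
    intro hEq
    have hval : (u.val % m + a.val % m) % (m + 1)
        = (u.val % m + b.val % m) % (m + 1) := by
      have h' := congrArg Fin.val hEq
      simpa using h'
    have hu' : u.val % m < m := Nat.mod_lt _ hmpos
    have ha' : a.val % m < m := Nat.mod_lt _ hmpos
    have hb' : b.val % m < m := Nat.mod_lt _ hmpos
    rcases modlem _ _ (by omega) (by omega) hval with h | h | h
    · have hab' : a.val % m = b.val % m := by omega
      rcases lemA a b hab' with h1 | h1 | h1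
      · exact hab h1
      · have hs1 := hadj_mem u a he₁
        have hs2 := hadj_mem u b he₂
        exact hsum _ hs1 _ (hsym _ hs2) (by rw [h1]; ring)
      · have hs1 := hadj_mem u a he₁
        have hs2 := hadj_mem u b he₂
        exact hsum _ hs2 _ (hsym _ hs1) (by rw [h1]; ring)
    · omega
    · omega
  · -- edge-vertex condition
    intro e he u hue
    obtain ⟨a, rfl⟩ := Sym2.mem_iff_exists.mp hue
    rw [SimpleGraph.mem_edgeSet] at he
    intro hEq
    have hval : (u.val % m + a.val % m) % (m + 1) = 2 * (u.val % m) % (m + 1) := by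
      have h' := congrArg Fin.val hEq
      simpa using h'
    have hπ := hpi_ne u a he
    have hu' : u.val % m < m := Nat.mod_lt _ hmpos
    have ha' : a.val % m < m := Nat.mod_lt _ hmpos
    rcases modlem _ _ (by omega) (by omega) hval with h | h | h
    · exact hπ (by omega)
    · omega
    · omega
end

section
/- The power of cycle C_21^6 has total chromatic number at most 14, i.e., it satisfies the Total Coloring Conjecture: χ''(C_21^6) ≤ Δ(C_21^6) + 2 = 14. -/
open SimpleGraph

def cvList : List ℕ := [1, 10, 0, 5, 9, 12, 3, 6, 10, 1, 7, 0, 9, 5, 6, 8, 13, 4, 12, 11, 3]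
def ceTable : List (List ℕ) := [
  [0, 2, 10, 11, 5, 9, 13, 0, 0, 0, 0, 0, 0, 0, 0, 3, 7, 6, 0, 4, 8],
  [2, 0, 6, 4, 3, 5, 8, 13, 0, 0, 0, 0, 0, 0, 0, 0, 0, 7, 11, 9, 12],
  [10, 6, 0, 13, 4, 11, 7, 9, 12, 0, 0, 0, 0, 0, 0, 0, 0, 2, 8, 1, 5],
  [11, 4, 13, 0, 0, 8, 9, 12, 3, 6, 0, 0, 0, 0, 0, 0, 0, 0, 7, 2, 1],
  [5, 3, 4, 0, 0, 13, 12, 1, 6, 7, 10, 0, 0, 0, 0, 0, 0, 0, 0, 8, 11],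
  [9, 5, 11, 8, 13, 0, 10, 4, 0, 3, 2, 7, 0, 0, 0, 0, 0, 0, 0, 0, 6],
  [13, 8, 7, 9, 12, 10, 0, 11, 4, 5, 1, 2, 6, 0, 0, 0, 0, 0, 0, 0, 0],
  [0, 13, 9, 12, 1, 4, 11, 0, 8, 10, 3, 5, 2, 7, 0, 0, 0, 0, 0, 0, 0],
  [0, 0, 12, 3, 6, 0, 4, 8, 0, 2, 9, 13, 1, 11, 5, 0, 0, 0, 0, 0, 0],
  [0, 0, 0, 6, 7, 3, 5, 10, 2, 0, 4, 11, 12, 9, 13, 0, 0, 0, 0, 0, 0],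
  [0, 0, 0, 0, 10, 2, 1, 3, 9, 4, 0, 8, 11, 0, 12, 6, 5, 0, 0, 0, 0],
  [0, 0, 0, 0, 0, 7, 2, 5, 13, 11, 8, 0, 4, 3, 1, 12, 10, 9, 0, 0, 0],
  [0, 0, 0, 0, 0, 0, 6, 2, 1, 12, 11, 4, 0, 13, 3, 7, 8, 5, 10, 0, 0],
  [0, 0, 0, 0, 0, 0, 0, 7, 11, 9, 0, 3, 13, 0, 10, 2, 1, 12, 4, 6, 0],
  [0, 0, 0, 0, 0, 0, 0, 0, 5, 13, 12, 1, 3, 10, 0, 11, 4, 8, 2, 7, 0],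
  [3, 0, 0, 0, 0, 0, 0, 0, 0, 0, 6, 12, 7, 2, 11, 0, 9, 1, 13, 10, 4],
  [7, 0, 0, 0, 0, 0, 0, 0, 0, 0, 5, 10, 8, 1, 4, 9, 0, 11, 6, 12, 2],
  [6, 7, 2, 0, 0, 0, 0, 0, 0, 0, 0, 9, 5, 12, 8, 1, 11, 0, 3, 0, 10],
  [0, 11, 8, 7, 0, 0, 0, 0, 0, 0, 0, 0, 10, 4, 2, 13, 6, 3, 0, 5, 9],
  [4, 9, 1, 2, 8, 0, 0, 0, 0, 0, 0, 0, 0, 6, 7, 10, 12, 0, 5, 0, 13],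
  [8, 12, 5, 1, 11, 6, 0, 0, 0, 0, 0, 0, 0, 0, 0, 4, 2, 10, 9, 13, 0]]


def cvFun : ZMod 21 → Fin 14 := fun x => Fin.ofNat 14 (cvList.getD x.val 0 : ℕ)

def gFun : ZMod 21 → ZMod 21 → Fin 14 :=
  fun a b => Fin.ofNat 14 ((ceTable.getD a.val []).getD b.val 0 : ℕ)

lemma gFun_symm : ∀ a b : ZMod 21, gFun a b = gFun b a := by decide

def ceFun : Sym2 (ZMod 21) → Fin 14 := Sym2.lift ⟨gFun, gFun_symm⟩

lemma pc_eq : powerOfCycle 21 6 = cayley 21 ({1,2,3,4,5,6} : Finset (ZMod 21)) := by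
  unfold powerOfCycle cayley
  congr 1
  ext x y
  constructor
  · rintro ⟨j, h1, h6, hx⟩
    interval_cases j <;> rw [hx] <;> decide
  · intro h
    simp only [Finset.mem_insert, Finset.mem_singleton] at h
    rcases h with h|h|h|h|h|h
    exacts [⟨1, by norm_num, by norm_num, by simpa using h⟩,
      ⟨2, by norm_num, by norm_num, by simpa using h⟩,
      ⟨3, by norm_num, by norm_num, by simpa using h⟩,
      ⟨4, by norm_num, by norm_num, by simpa using h⟩,
      ⟨5, by norm_num, by norm_num, by simpa using h⟩,
      ⟨6, by norm_num, by norm_num, by simpa using h⟩]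

lemma helper2 {V : Type*} (G : SimpleGraph V) {t : ℕ} (ce : Sym2 V → Fin t)
    (h : ∀ a b c : V, G.Adj a b → G.Adj a c → b ≠ c → ce s(a,b) ≠ ce s(a,c)) :
    ∀ e₁ ∈ G.edgeSet, ∀ e₂ ∈ G.edgeSet, e₁ ≠ e₂ → (∃ u : V, u ∈ e₁ ∧ u ∈ e₂) →
      ce e₁ ≠ ce e₂ := by
  intro e₁ he₁ e₂ he₂ hne hsh
  obtain ⟨u, hu₁, hu₂⟩ := hsh
  induction e₁ using Sym2.ind with
  | _ x y =>
  induction e₂ using Sym2.ind with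
  | _ z w =>
  rw [Sym2.mem_iff] at hu₁ hu₂
  rw [SimpleGraph.mem_edgeSet] at he₁ he₂
  rcases hu₁ with rfl | rfl <;> rcases hu₂ with rfl | rfl
  · exact h u y w he₁ he₂ (fun hyw => hne (by rw [hyw]))
  · rw [Sym2.eq_swap (a := z) (b := u)] at hne ⊢
    exact h u y z he₁ he₂.symm (fun hyz => hne (by rw [hyz]))
  · rw [Sym2.eq_swap (a := x) (b := u)] at hne ⊢
    exact h u x w he₁.symm he₂ (fun hxw => hne (by rw [hxw]))
  · rw [Sym2.eq_swap (a := x) (b := u), Sym2.eq_swap (a := z) (b := u)] at hne ⊢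
    exact h u x z he₁.symm he₂.symm (fun hxz => hne (by rw [hxz]))

lemma helper3 {V : Type*} (G : SimpleGraph V) {t : ℕ} (ce : Sym2 V → Fin t)
    (cv : V → Fin t) (h : ∀ a b : V, G.Adj a b → ce s(a,b) ≠ cv a) :
    ∀ e ∈ G.edgeSet, ∀ u : V, u ∈ e → ce e ≠ cv u := by
  intro e he u hu
  induction e using Sym2.ind with
  | _ x y =>
  rw [Sym2.mem_iff] at hu
  rw [SimpleGraph.mem_edgeSet] at he
  rcases hu with rfl | rfl
  · exact h u y he
  · rw [Sym2.eq_swap]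
    exact h u x he.symm

set_option maxRecDepth 100000 in
set_option maxHeartbeats 4000000 in
lemma total_ok : IsTotalColoring (powerOfCycle 21 6) cvFun ceFun := by
  rw [pc_eq]
  refine ⟨by decide, helper2 _ _ ?_, helper3 _ _ _ ?_⟩ <;> decide

/-- Example 2.1: `χ''(C_21^6) ≤ Δ + 2 = 14`. -/
theorem powerOfCycle_21_6 : totalChromaticNumber (powerOfCycle 21 6) ≤ 14 :=
  Nat.sInf_le ⟨cvFun, ceFun, total_ok⟩
end

section
/- The power of cycle C_18^4 is type I and its equitable total chromatic number equals its total chromatic number: χ''_=(C_18^4) = χ''(C_18^4) = 9. -/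
open SimpleGraph

namespace PC184Aux

abbrev C18 : SimpleGraph (ZMod 18) := cayley 18 {1,2,3,4}

lemma pc_eq : powerOfCycle 18 4 = cayley 18 {1,2,3,4} := by
  ext x y
  simp only [powerOfCycle, cayley, fromRel_adj, and_congr_right_iff]
  intro _
  have key : ∀ a b : ZMod 18,
      (∃ j : ℕ, 1 ≤ j ∧ j ≤ 4 ∧ a - b = (j : ZMod 18)) ↔
        a - b ∈ ({1,2,3,4} : Finset (ZMod 18)) := by
    intro a b
    constructor
    · rintro ⟨j, h1, h4, hj⟩
      interval_cases j <;> rw [hj] <;> decide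
    · intro h
      simp only [Finset.mem_insert, Finset.mem_singleton] at h
      rcases h with h|h|h|h
      · exact ⟨1, by norm_num, by norm_num, by simpa using h⟩
      · exact ⟨2, by norm_num, by norm_num, by simpa using h⟩
      · exact ⟨3, by norm_num, by norm_num, by simpa using h⟩
      · exact ⟨4, by norm_num, by norm_num, by simpa using h⟩
  rw [key, key]

def cvF : ZMod 18 → Fin 9 := fun x => ⟨2 * x.val % 9, Nat.mod_lt _ (by norm_num)⟩

def ceF : Sym2 (ZMod 18) → Fin 9 :=
  Sym2.lift ⟨fun x y => ⟨(x.val + y.val) % 9, Nat.mod_lt _ (by norm_num)⟩,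
    fun x y => by simp [Nat.add_comm]⟩

lemma factA : ∀ x y : ZMod 18, C18.Adj x y → cvF x ≠ cvF y := by decide

lemma factB : ∀ u v w : ZMod 18, C18.Adj u v → C18.Adj u w → v ≠ w →
    ceF s(u,v) ≠ ceF s(u,w) := by decide

lemma factC : ∀ u v : ZMod 18, C18.Adj u v → ceF s(u,v) ≠ cvF u := by decide

lemma cardV : ∀ c : Fin 9, ({v : ZMod 18 | cvF v = c}).ncard = 2 := by
  intro c
  have h : {v : ZMod 18 | cvF v = c} = ↑(Finset.univ.filter (fun v => cvF v = c)) := by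
    ext v; simp
  rw [h, Set.ncard_coe_finset]
  clear h; revert c; decide

lemma cardE : ∀ c : Fin 9,
    ({e : Sym2 (ZMod 18) | e ∈ C18.edgeSet ∧ ceF e = c}).ncard = 8 := by
  intro c
  have h : {e : Sym2 (ZMod 18) | e ∈ C18.edgeSet ∧ ceF e = c}
      = ↑(Finset.univ.filter (fun e => e ∈ C18.edgeSet ∧ ceF e = c)) := by
    ext e; simp
  rw [h, Set.ncard_coe_finset]
  clear h; revert c; decide

lemma isTotal : IsTotalColoring (powerOfCycle 18 4) cvF ceF := by
  rw [pc_eq]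
  refine ⟨factA, ?_, ?_⟩
  · intro e₁ he₁ e₂ he₂ hne hu
    obtain ⟨u, hu1, hu2⟩ := hu
    obtain ⟨v, rfl⟩ := Sym2.mem_iff_exists.mp hu1
    obtain ⟨w, rfl⟩ := Sym2.mem_iff_exists.mp hu2
    have hvw : v ≠ w := fun h => hne (by rw [h])
    exact factB u v w ((SimpleGraph.mem_edgeSet _).mp he₁) ((SimpleGraph.mem_edgeSet _).mp he₂) hvw
  · intro e he u hu
    obtain ⟨v, rfl⟩ := Sym2.mem_iff_exists.mp hu
    exact factC u v ((SimpleGraph.mem_edgeSet _).mp he)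

lemma classSize (c : Fin 9) : totalClassSize (powerOfCycle 18 4) cvF ceF c = 10 := by
  rw [totalClassSize, pc_eq, cardV c, cardE c]

lemma isEquitable : IsEquitableTotalColoring (powerOfCycle 18 4) cvF ceF := by
  refine ⟨isTotal, fun c c' => ?_⟩
  rw [classSize c, classSize c']
  omega

lemma lower_bound {t : ℕ} (cv : ZMod 18 → Fin t) (ce : Sym2 (ZMod 18) → Fin t)
    (h : IsTotalColoring (powerOfCycle 18 4) cv ce) : 9 ≤ t := by
  rw [pc_eq] at h
  obtain ⟨h1, h2, h3⟩ := h
  set A : Finset (ZMod 18) := {1,2,3,4,14,15,16,17} with hA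
  have hadj : ∀ a ∈ A, C18.Adj 0 a := by decide
  have hinj : Set.InjOn (fun a => ce s(0, a)) ↑A := by
    intro a ha b hb hab
    by_contra hne
    have hA0 : ∀ a ∈ A, a ≠ (0 : ZMod 18) := by decide
    have hedne : s((0 : ZMod 18), a) ≠ s((0 : ZMod 18), b) := by
      intro hcontra
      rw [Sym2.eq_iff] at hcontra
      rcases hcontra with ⟨_, h⟩ | ⟨_, h⟩
      · exact hne h
      · exact hA0 a ha h
    exact h2 s(0, a) ((SimpleGraph.mem_edgeSet _).mpr (hadj a ha))
      s(0, b) ((SimpleGraph.mem_edgeSet _).mpr (hadj b hb)) hedne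
      ⟨0, Sym2.mem_mk_left 0 a, Sym2.mem_mk_left 0 b⟩ hab
  have hnotmem : cv 0 ∉ A.image (fun a => ce s(0, a)) := by
    intro hmem
    obtain ⟨a, ha, hca⟩ := Finset.mem_image.mp hmem
    exact h3 s(0, a) ((SimpleGraph.mem_edgeSet _).mpr (hadj a ha)) 0
      (Sym2.mem_mk_left 0 a) hca
  have hcard : (insert (cv 0) (A.image (fun a => ce s(0, a)))).card = 9 := by
    rw [Finset.card_insert_of_notMem hnotmem, Finset.card_image_of_injOn hinj]
    decide
  calc 9 = (insert (cv 0) (A.image (fun a => ce s(0, a)))).card := hcard.symm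
    _ ≤ (Finset.univ : Finset (Fin t)).card := Finset.card_le_univ _
    _ = t := by simp


end PC184Aux

/-- Example 2.2: `C_18^4` is type I with `χ''_=(C_18^4) = χ''(C_18^4) = 9`. -/
theorem powerOfCycle_18_4_equitable :
    equitableTotalChromaticNumber (powerOfCycle 18 4) = 9 ∧
    totalChromaticNumber (powerOfCycle 18 4) = 9 := by
  have h9E : 9 ∈ {t : ℕ | ∃ cv : ZMod 18 → Fin t, ∃ ce : Sym2 (ZMod 18) → Fin t,
      IsEquitableTotalColoring (powerOfCycle 18 4) cv ce} :=
    ⟨PC184Aux.cvF, PC184Aux.ceF, PC184Aux.isEquitable⟩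
  have h9T : 9 ∈ {t : ℕ | ∃ cv : ZMod 18 → Fin t, ∃ ce : Sym2 (ZMod 18) → Fin t,
      IsTotalColoring (powerOfCycle 18 4) cv ce} :=
    ⟨PC184Aux.cvF, PC184Aux.ceF, PC184Aux.isEquitable.1⟩
  have hlbT : ∀ t ∈ {t : ℕ | ∃ cv : ZMod 18 → Fin t, ∃ ce : Sym2 (ZMod 18) → Fin t,
      IsTotalColoring (powerOfCycle 18 4) cv ce}, 9 ≤ t := by
    rintro t ⟨cv, ce, h⟩
    exact PC184Aux.lower_bound cv ce h
  have hlbE : ∀ t ∈ {t : ℕ | ∃ cv : ZMod 18 → Fin t, ∃ ce : Sym2 (ZMod 18) → Fin t,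
      IsEquitableTotalColoring (powerOfCycle 18 4) cv ce}, 9 ≤ t := by
    rintro t ⟨cv, ce, h⟩
    exact PC184Aux.lower_bound cv ce h.1
  constructor
  · exact le_antisymm (Nat.sInf_le h9E) (le_csInf ⟨9, h9E⟩ hlbE)
  · exact le_antisymm (Nat.sInf_le h9T) (le_csInf ⟨9, h9T⟩ hlbT)
end

section
/- Let G be the circulant graph Cay(Z_24, S) with connection set S = {1, 3, 4, 5, 10, 14, 19, 20, 21, 23}. Then the total chromatic number of G satisfies χ''(G) ≤ 13. -/
open SimpleGraph

def cvL : List (Fin 13) := [6, 7, 0, 5, 11, 10, 9, 6, 9, 5, 3, 12, 3, 6, 2, 1, 8, 9, 4, 7, 0, 11, 1, 12]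
def ceL : List (Fin 13) := [0, 0, 0, 4, 7, 1, 0, 0, 0, 0, 10, 0, 0, 0, 9, 0, 0, 0, 0, 5, 12, 2, 0, 8, 0, 0, 2, 0, 1, 3, 10, 0, 0, 0, 0, 4, 0, 0, 0, 9, 0, 0, 0, 0, 5, 8, 11, 0, 0, 2, 0, 8, 0, 4, 12, 9, 0, 0, 0, 0, 10, 0, 0, 0, 3, 0, 0, 0, 0, 6, 7, 5, 4, 0, 8, 0, 9, 0, 3, 10, 11, 0, 0, 0, 0, 12, 0, 0, 0, 1, 0, 0, 0, 0, 0, 7, 7, 1, 0, 9, 0, 6, 0, 8, 12, 4, 0, 0, 0, 0, 3, 0, 0, 0, 10, 0, 0, 0, 0, 0, 1, 3, 4, 0, 6, 0, 7, 0, 8, 0, 9, 0, 0, 0, 0, 2, 0, 0, 0, 12, 0, 0, 0, 0, 0, 10, 12, 3, 0, 7, 0, 5, 0, 11, 1, 8, 0, 0, 0, 0, 2, 0, 0, 0, 4, 0, 0, 0, 0, 0, 9, 10, 8, 0, 5, 0, 7, 0, 12, 2, 11, 0, 0, 0, 0, 3, 0, 0, 0, 0, 0, 0, 0, 0, 0,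 11, 12, 8, 0, 7, 0, 3, 0, 1, 5, 10, 0, 0, 0, 0, 0, 0, 0, 0, 6, 0, 0, 0, 0, 0, 4, 0, 11, 0, 3, 0, 6, 0, 2, 8, 1, 0, 0, 0, 0, 10, 0, 0, 0, 9, 10, 0, 0, 0, 0, 9, 1, 12, 0, 6, 0, 0, 0, 2, 5, 4, 0, 0, 0, 0, 7, 0, 0, 0, 0, 4, 0, 0, 0, 0, 8, 2, 1, 0, 0, 0, 6, 0, 7, 5, 11, 0, 0, 0, 0, 10, 0, 0, 0, 0, 10, 0, 0, 0, 0, 11, 5, 2, 0, 6, 0, 7, 0, 8, 9, 4, 0, 0, 0, 0, 12, 0, 0, 0, 0, 12, 0, 0, 0, 0, 10, 8, 2, 0, 7, 0, 4, 0, 1, 0, 9, 0, 0, 0, 0, 3, 9, 0, 0, 0, 3, 0, 0, 0, 0, 1, 5, 7, 0, 4, 0, 10, 0, 12, 11, 6, 0, 0, 0, 0, 0, 9, 0, 0, 0, 2, 0, 0, 0, 0, 4, 5, 8, 0, 10, 0, 0, 0, 7, 3, 6, 0, 0, 0, 0, 0, 3, 0, 0, 0, 2, 0, 0, 0, 0,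 11, 9, 1, 0, 0, 0, 5, 0, 4, 10, 12, 0, 0, 0, 0, 0, 1, 0, 0, 0, 3, 0, 0, 0, 0, 4, 0, 12, 0, 5, 0, 2, 0, 8, 7, 10, 0, 0, 0, 0, 0, 10, 0, 0, 0, 0, 0, 0, 0, 0, 9, 11, 7, 0, 2, 0, 1, 0, 5, 3, 6, 5, 0, 0, 0, 0, 12, 0, 0, 0, 10, 0, 0, 0, 0, 6, 3, 4, 0, 1, 0, 9, 0, 2, 11, 12, 5, 0, 0, 0, 0, 4, 0, 0, 0, 7, 0, 0, 0, 0, 6, 10, 8, 0, 9, 0, 3, 0, 1, 2, 8, 6, 0, 0, 0, 0, 0, 0, 0, 0, 10, 0, 0, 0, 0, 12, 7, 5, 0, 3, 0, 9, 0, 0, 11, 7, 0, 0, 0, 0, 0, 6, 0, 0, 0, 12, 0, 0, 0, 0, 10, 3, 2, 0, 9, 0, 4, 8, 0, 5, 7, 0, 0, 0, 0, 0, 9, 0, 0, 0, 3, 0, 0, 0, 0, 6, 11, 1, 0, 4, 0]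


def cvF : ZMod 24 → Fin 13 := fun x => cvL.getD x.val 0

def gF : ZMod 24 → ZMod 24 → Fin 13 := fun x y => ceL.getD (x.val * 24 + y.val) 0

def Sx : Finset (ZMod 24) := {1, 3, 4, 5, 10, 14, 19, 20, 21, 23}

set_option maxRecDepth 10000 in
lemma gF_symm : ∀ x y : ZMod 24, gF x y = gF y x := by decide

def ceF : Sym2 (ZMod 24) → Fin 13 := Sym2.lift ⟨gF, gF_symm⟩

set_option maxRecDepth 10000 in
lemma h1 : ∀ u v : ZMod 24, (cayley 24 Sx).Adj u v → cvF u ≠ cvF v := by decide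

set_option maxRecDepth 10000 in
lemma h2 : ∀ u a b : ZMod 24, (cayley 24 Sx).Adj u a → (cayley 24 Sx).Adj u b →
    a ≠ b → gF u a ≠ gF u b := by decide

set_option maxRecDepth 10000 in
lemma h3 : ∀ u v : ZMod 24, (cayley 24 Sx).Adj u v →
    gF u v ≠ cvF u ∧ gF u v ≠ cvF v := by decide

lemma total_coloring_valid : IsTotalColoring (cayley 24 Sx) cvF ceF := by
  refine ⟨fun u v h => h1 u v h, ?_, ?_⟩
  · intro e₁ he₁ e₂ he₂ hne hu
    induction e₁ using Sym2.ind with | _ a b =>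
    induction e₂ using Sym2.ind with | _ c d =>
    rw [SimpleGraph.mem_edgeSet] at he₁ he₂
    obtain ⟨u, hu1, hu2⟩ := hu
    rw [Sym2.mem_iff] at hu1 hu2
    have hab : ceF s(a, b) = gF a b := Sym2.lift_mk _ _ _
    have hcd : ceF s(c, d) = gF c d := Sym2.lift_mk _ _ _
    rcases hu1 with rfl | rfl <;> rcases hu2 with h' | h'
    · subst h'
      have hbd : b ≠ d := fun h => hne (by rw [h])
      rw [hab, hcd]; exact h2 u b d he₁ he₂ hbd
    · subst h'
      have hbc : b ≠ c := fun h => hne (by rw [h, Sym2.eq_swap])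
      rw [hab, hcd, gF_symm c u]
      exact h2 u b c he₁ he₂.symm hbc
    · subst h'
      have had : a ≠ d := fun h => hne (by rw [h, Sym2.eq_swap])
      rw [hab, hcd, gF_symm a u]
      exact h2 u a d he₁.symm he₂ had
    · subst h'
      have hac : a ≠ c := fun h => hne (by rw [h])
      rw [hab, hcd, gF_symm a u, gF_symm c u]
      exact h2 u a c he₁.symm he₂.symm hac
  · intro e he u hu
    induction e using Sym2.ind with | _ a b =>
    rw [SimpleGraph.mem_edgeSet] at he
    rw [Sym2.mem_iff] at hu
    have hab : ceF s(a, b) = gF a b := Sym2.lift_mk _ _ _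
    rcases hu with rfl | rfl
    · rw [hab]; exact (h3 u b he).1
    · rw [hab]; exact (h3 a u he).2

/-- Example 3.2: the circulant graph on `ZMod 24` with connection set
`{1,3,4,5,10,14,19,20,21,23}` has `χ''(G) ≤ 13`. -/
theorem circulant_24_example (S : Finset (ZMod 24))
    (hS : S = {1, 3, 4, 5, 10, 14, 19, 20, 21, 23}) :
    totalChromaticNumber (cayley 24 S) ≤ 13 := by
  subst hS
  have : (13 : ℕ) ∈ {t : ℕ | ∃ cv : ZMod 24 → Fin t, ∃ ce : Sym2 (ZMod 24) → Fin t,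
      IsTotalColoring (cayley 24 Sx) cv ce} := ⟨cvF, ceF, total_coloring_valid⟩
  exact Nat.sInf_le this
end

section
/- Let G be the circulant graph Cay(Z_18, S) with connection set S = {1, 2, 4, 6, 7, 8, 10, 11, 12, 14, 16, 17}. Then G is 12-regular, G is type I, and its equitable total chromatic number equals Δ(G) + 1: χ''_=(G) = χ''(G) = 13. -/
open SimpleGraph

def gg : Fin 18 → Fin 18 → Fin 13 :=
  ![![0, 8, 3, 0, 10, 0, 5, 4, 1, 0, 12, 7, 11, 0, 9, 0, 2, 6],
    ![8, 0, 6, 7, 0, 3, 0, 9, 5, 12, 0, 11, 0, 10, 0, 4, 0, 2],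
    ![3, 6, 0, 4, 5, 0, 12, 0, 7, 11, 10, 0, 9, 0, 1, 0, 8, 0],
    ![0, 7, 4, 0, 6, 2, 0, 11, 0, 9, 5, 10, 0, 12, 0, 8, 0, 1],
    ![10, 0, 5, 6, 0, 9, 2, 0, 11, 0, 3, 0, 8, 0, 12, 7, 1, 0],
    ![0, 3, 0, 2, 9, 0, 0, 1, 0, 6, 0, 8, 4, 11, 0, 10, 12, 7],
    ![5, 0, 12, 0, 2, 0, 0, 3, 10, 0, 8, 0, 1, 7, 4, 0, 11, 9],
    ![4, 9, 0, 11, 0, 1, 3, 0, 2, 8, 0, 5, 0, 6, 10, 0, 0, 12],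
    ![1, 5, 7, 0, 11, 0, 10, 2, 0, 4, 9, 0, 6, 0, 3, 12, 0, 0],
    ![0, 12, 11, 9, 0, 6, 0, 8, 4, 0, 7, 1, 0, 2, 0, 5, 3, 10],
    ![12, 0, 10, 5, 3, 0, 8, 0, 9, 7, 0, 6, 2, 0, 11, 0, 4, 0],
    ![7, 11, 0, 10, 0, 8, 0, 5, 0, 1, 6, 0, 12, 9, 0, 3, 0, 4],
    ![11, 0, 9, 0, 8, 4, 1, 0, 6, 0, 2, 12, 0, 5, 7, 0, 10, 0],
    ![0, 10, 0, 12, 0, 11, 7, 6, 0, 2, 0, 9, 5, 0, 8, 1, 0, 3],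
    ![9, 0, 1, 0, 12, 0, 4, 10, 3, 0, 11, 0, 7, 8, 0, 2, 6, 0],
    ![0, 4, 0, 8, 7, 10, 0, 0, 12, 5, 0, 3, 0, 1, 2, 0, 9, 11],
    ![2, 0, 8, 0, 1, 12, 11, 0, 0, 3, 4, 0, 10, 0, 6, 9, 0, 5],
    ![6, 2, 0, 1, 0, 7, 9, 12, 0, 10, 0, 4, 0, 3, 0, 11, 5, 0]]


def toF18 : ZMod 18 → Fin 18 := fun u => u

lemma gg_symm : ∀ a b : Fin 18, gg a b = gg b a := by decide

def cvf : ZMod 18 → Fin 13 := fun v => ⟨(toF18 v).val % 9, by omega⟩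

def cef : Sym2 (ZMod 18) → Fin 13 :=
  Sym2.lift ⟨fun u v => gg (toF18 u) (toF18 v), fun u v => gg_symm _ _⟩

lemma isTotalColoring_of {V : Type*} {G : SimpleGraph V} {t : ℕ}
    {cv : V → Fin t} {ce : Sym2 V → Fin t}
    (h1 : ∀ u v, G.Adj u v → cv u ≠ cv v)
    (h2 : ∀ u v w, G.Adj u v → G.Adj u w → v ≠ w → ce s(u,v) ≠ ce s(u,w))
    (h3 : ∀ u v, G.Adj u v → ce s(u,v) ≠ cv u) :
    IsTotalColoring G cv ce := by
  refine ⟨h1, ?_, ?_⟩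
  · intro e₁ he₁ e₂ he₂ hne hu
    obtain ⟨u, hu1, hu2⟩ := hu
    induction e₁ with
    | _ a b =>
      induction e₂ with
      | _ c d =>
        rw [SimpleGraph.mem_edgeSet] at he₁ he₂
        rcases Sym2.mem_iff.mp hu1 with rfl | rfl <;>
          rcases Sym2.mem_iff.mp hu2 with rfl | rfl
        · exact h2 u b d he₁ he₂ (fun h => hne (by rw [h]))
        · rw [Sym2.eq_swap (a := c)]
          exact h2 u b c he₁ he₂.symm (fun h => hne (by rw [h, Sym2.eq_swap]))
        · rw [Sym2.eq_swap (a := a)]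
          exact h2 u a d he₁.symm he₂ (fun h => hne (by rw [← h, Sym2.eq_swap]))
        · rw [Sym2.eq_swap (a := a), Sym2.eq_swap (a := c)]
          exact h2 u a c he₁.symm he₂.symm
            (fun h => hne (by rw [Sym2.eq_swap, h, Sym2.eq_swap]))
  · intro e he u hu
    induction e with
    | _ a b =>
      rw [SimpleGraph.mem_edgeSet] at he
      rcases Sym2.mem_iff.mp hu with rfl | rfl
      · exact h3 u b he
      · rw [Sym2.eq_swap]; exact h3 u a he.symm

abbrev G18 := cayley 18 ({1,2,4,6,7,8,10,11,12,14,16,17} : Finset (ZMod 18))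

set_option maxHeartbeats 2000000 in
lemma hTC : IsTotalColoring G18 cvf cef := by
  apply isTotalColoring_of <;> decide

lemma class_as_card (c : Fin 13) :
    totalClassSize G18 cvf cef c =
      (Finset.univ.filter (fun v : ZMod 18 => cvf v = c)).card
      + (Finset.univ.filter (fun e : Sym2 (ZMod 18) => e ∈ G18.edgeSet ∧ cef e = c)).card := by
  unfold totalClassSize
  rw [Set.ncard_eq_toFinset_card', Set.ncard_eq_toFinset_card',
    Set.toFinset_setOf, Set.toFinset_setOf]

set_option maxHeartbeats 4000000 in
lemma card_v : ∀ c : Fin 13,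
    (Finset.univ.filter (fun v : ZMod 18 => cvf v = c)).card = if c.val < 9 then 2 else 0 := by
  decide

set_option maxHeartbeats 4000000 in
lemma card_e : ∀ c : Fin 13,
    (Finset.univ.filter (fun e : Sym2 (ZMod 18) => e ∈ G18.edgeSet ∧ cef e = c)).card
      = if c.val < 9 then 8 else 9 := by
  decide

lemma class_val (c : Fin 13) :
    totalClassSize G18 cvf cef c = if c.val < 9 then 10 else 9 := by
  rw [class_as_card, card_v c, card_e c]
  split <;> rfl

lemma hETC : IsEquitableTotalColoring G18 cvf cef := by
  refine ⟨hTC, ?_⟩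
  intro c c'
  rw [class_val, class_val]
  split <;> split <;> omega

def Slist18 : List (ZMod 18) := [1,2,4,6,7,8,10,11,12,14,16,17]

lemma lower_bound {t : ℕ} {cv : ZMod 18 → Fin t} {ce : Sym2 (ZMod 18) → Fin t}
    (h : IsTotalColoring G18 cv ce) : 13 ≤ t := by
  have hadj : ∀ s ∈ Slist18, G18.Adj 0 s := by decide
  have hndS : Slist18.Pairwise (· ≠ ·) := by decide
  have hmapnd : (Slist18.map (fun s => ce s(0, s))).Nodup := by
    refine List.Nodup.map_on ?_ hndS
    intro a ha b hb hfe
    by_contra hab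
    refine absurd hfe ?_
    refine h.2.1 s(0, a) (G18.mem_edgeSet.mpr (hadj a ha))
      s(0, b) (G18.mem_edgeSet.mpr (hadj b hb)) ?_
      ⟨0, Sym2.mem_iff.mpr (Or.inl rfl), Sym2.mem_iff.mpr (Or.inl rfl)⟩
    intro heq
    rcases Sym2.eq_iff.mp heq with ⟨-, h2⟩ | ⟨h1, -⟩
    · exact hab h2
    · exact (hadj b hb).ne h1
  have hnd : (cv 0 :: Slist18.map (fun s => ce s(0, s))).Nodup := by
    rw [List.nodup_cons]
    refine ⟨?_, hmapnd⟩
    intro hmem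
    obtain ⟨s, hs, heq⟩ := List.mem_map.mp hmem
    exact h.2.2 s(0, s) (G18.mem_edgeSet.mpr (hadj s hs)) 0
      (Sym2.mem_iff.mpr (Or.inl rfl)) heq
  have hlen : (cv 0 :: Slist18.map (fun s => ce s(0, s))).length = 13 := by
    simp [Slist18]
  calc (13 : ℕ) = (cv 0 :: Slist18.map (fun s => ce s(0, s))).toFinset.card := by
        rw [List.toFinset_card_of_nodup hnd, hlen]
    _ ≤ Fintype.card (Fin t) := Finset.card_le_univ _
    _ = t := Fintype.card_fin t


/-- Example 3.4: the circulant graph on `ZMod 18` with connection set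
`{1,2,4,6,7,8,10,11,12,14,16,17}` is 12-regular, type I, and
`χ''_=(G) = χ''(G) = 13 = Δ + 1`. -/
theorem circulant_18_example (S : Finset (ZMod 18))
    (hS : S = {1, 2, 4, 6, 7, 8, 10, 11, 12, 14, 16, 17}) :
    (cayley 18 S).IsRegularOfDegree 12 ∧
    totalChromaticNumber (cayley 18 S) = 13 ∧
    equitableTotalChromaticNumber (cayley 18 S) = 13 := by
  subst hS
  refine ⟨?_, ?_, ?_⟩
  · unfold SimpleGraph.IsRegularOfDegree SimpleGraph.degree
    decide
  · have h13 : 13 ∈ {t : ℕ | ∃ cv : ZMod 18 → Fin t, ∃ ce : Sym2 (ZMod 18) → Fin t,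
        IsTotalColoring G18 cv ce} := ⟨cvf, cef, hTC⟩
    refine le_antisymm (Nat.sInf_le h13) (le_csInf ⟨13, h13⟩ ?_)
    rintro t ⟨cv, ce, h⟩
    exact lower_bound h
  · have h13 : 13 ∈ {t : ℕ | ∃ cv : ZMod 18 → Fin t, ∃ ce : Sym2 (ZMod 18) → Fin t,
        IsEquitableTotalColoring G18 cv ce} := ⟨cvf, cef, hETC⟩
    refine le_antisymm (Nat.sInf_le h13) (le_csInf ⟨13, h13⟩ ?_)
    rintro t ⟨cv, ce, h⟩
    exact lower_bound h.1
end
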